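/- arXiv:0901.1298 — 3 statements merged into one kernel-verified Lean document; each statement's English description precedes it below -/
import Mathlib

section
/- Let T be a finite tree, let v be a vertex of degree 1 with unique neighbor w, and set T₁ = T ∖ {v}, T₂ = T ∖ {v,w}. For every k and n there is a short exact sequence of F₂-vector spaces 0 → SC^k(T₁,n) ⊕ SC^{k−1}(T₁,n−1) → SC^k(T,n) → SC^k(T₂,n−1) → 0, where the first map sends a configuration of T₁ in the first (resp. second) summand to the configuration of T obtained by additionally assigning + (resp. −) to v, and the second map sends a configuration of T in which the edge vw is red to the configuration of T₂ obtained by deleting v, w and the red edge vw, and sends all other configurations to 0; moreover both maps commute with the differential D. -/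
open Polynomial Matrix

attribute [local instance] Classical.propDecidable

namespace Seifert

variable {V : Type} [Fintype V]

/-- A matching of a graph `G`: a finite set of edges of `G` that are pairwise disjoint. -/
def IsMatching (G : SimpleGraph V) (R : Finset (Sym2 V)) : Prop :=
  (∀ e ∈ R, e ∈ G.edgeSet) ∧
    ∀ e ∈ R, ∀ f ∈ R, e ≠ f → ∀ v : V, v ∈ e → v ∉ f

/-- A perfect matching: a matching covering every vertex. -/
def IsPerfectMatching (G : SimpleGraph V) (R : Finset (Sym2 V)) : Prop :=
  IsMatching G R ∧ ∀ v : V, ∃ e ∈ R, v ∈ e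

/-- A configuration on `G`: a matching (the set of red edges) together with an assignment
of a sign (`true` = plus, `false` = minus) to every vertex not covered by a red edge;
vertices covered by a red edge get `none`. -/
structure Config (G : SimpleGraph V) where
  red : Finset (Sym2 V)
  matching : IsMatching G red
  sign : V → Option Bool
  sign_none : ∀ v : V, sign v = none ↔ ∃ e ∈ red, v ∈ e

instance (G : SimpleGraph V) : Finite (Config G) :=
  Finite.of_injective (fun C => (C.red, C.sign)) (by
    rintro ⟨r, hr, s, hs⟩ ⟨r', hr', s', hs'⟩ h
    simp only [Prod.mk.injEq] at h
    obtain ⟨h1, h2⟩ := h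
    subst h1; subst h2; rfl)

noncomputable instance (G : SimpleGraph V) : Fintype (Config G) := Fintype.ofFinite _

/-- The grading `Q`: the number of minuses. -/
noncomputable def Qg {G : SimpleGraph V} (C : Config G) : ℕ :=
  (Finset.univ.filter fun v : V => C.sign v = some false).card

/-- The grading `E`: the number of minuses plus the number of red edges. -/
noncomputable def Eg {G : SimpleGraph V} (C : Config G) : ℕ := Qg C + C.red.card

/-- `DStep C C'` holds iff `C'` is one of the summands of `D(C)`: it is obtained from `C`
by deleting one red edge `e` and assigning a plus to one endpoint of `e` and a minus to
the other. -/
def DStep {G : SimpleGraph V} (C C' : Config G) : Prop :=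
  ∃ e ∈ C.red, C'.red = C.red.erase e ∧
    (∀ x : V, x ∉ e → C'.sign x = C.sign x) ∧
    ∃ u v : V, e = s(u, v) ∧ C'.sign u = some true ∧ C'.sign v = some false

/-- `dStep C C'` holds iff `C'` is one of the summands of `d(C)`: it is obtained from `C`
by changing the sign of one vertex from plus to minus. -/
def dStep {G : SimpleGraph V} (C C' : Config G) : Prop :=
  C'.red = C.red ∧ ∃ w : V, C.sign w = some true ∧ C'.sign w = some false ∧
    ∀ x : V, x ≠ w → C'.sign x = C.sign x

/-- The linear map on spaces of `F₂`-valued functions induced by a relation `r`: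
the basis vector of `a` is sent to the sum of the basis vectors of all `b` with `r a b`. -/
noncomputable def sumLin {α β : Type} [Fintype α] (r : α → β → Prop) :
    (α → ZMod 2) →ₗ[ZMod 2] (β → ZMod 2) where
  toFun f b := ∑ a : α, if r a b then f a else 0
  map_add' f g := by
    funext b
    simp only [Pi.add_apply]
    rw [← Finset.sum_add_distrib]
    exact Finset.sum_congr rfl fun a _ => by by_cases h : r a b <;> simp [h]
  map_smul' c f := by
    funext b
    simp only [RingHom.id_apply, Pi.smul_apply, smul_eq_mul, Finset.mul_sum]
    exact Finset.sum_congr rfl fun a _ => by by_cases h : r a b <;> simp [h]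

/-- The differential `D` on the total Seifert complex `SC(T)`. -/
noncomputable def Dmap (G : SimpleGraph V) :
    (Config G → ZMod 2) →ₗ[ZMod 2] (Config G → ZMod 2) :=
  sumLin DStep

/-- The differential `d` on the total Seifert complex `SC(T)`. -/
noncomputable def dmap (G : SimpleGraph V) :
    (Config G → ZMod 2) →ₗ[ZMod 2] (Config G → ZMod 2) :=
  sumLin dStep

/-- The graded piece `SC^k(T,n)`: the `F₂`-vector space with basis the configurations
with `Q = k` and `E = n`. -/
abbrev SC (G : SimpleGraph V) (k n : ℤ) : Type :=
  {C : Config G // (Qg C : ℤ) = k ∧ (Eg C : ℤ) = n} → ZMod 2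

/-- The differential `D` between graded pieces. (Mathematically it is nonzero only
from `SC^k(T,n)` to `SC^{k+1}(T,n)`.) -/
noncomputable def Dgr (G : SimpleGraph V) (k n k' n' : ℤ) :
    SC G k n →ₗ[ZMod 2] SC G k' n' :=
  sumLin fun C C' => DStep C.1 C'.1

/-- The dimension of the cohomology `ker g / im f` at the middle term of `A —f→ B —g→ C`
(taking the image of `f` intersected with the kernel of `g`). -/
noncomputable def cohDim {A B M : Type} [AddCommGroup A] [AddCommGroup B] [AddCommGroup M]
    [Module (ZMod 2) A] [Module (ZMod 2) B] [Module (ZMod 2) M]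
    (f : A →ₗ[ZMod 2] B) (g : B →ₗ[ZMod 2] M) : ℕ :=
  Module.finrank (ZMod 2)
    (LinearMap.ker g ⧸ (LinearMap.range f).comap (LinearMap.ker g).subtype)

/-- The dimension of the Seifert cohomology `SH^k(T,n)`. -/
noncomputable def SHdim (G : SimpleGraph V) (k n : ℤ) : ℕ :=
  cohDim (Dgr G (k - 1) n k n) (Dgr G k n (k + 1) n)

/-- The Seifert matrix of a graph with respect to an enumeration of its vertices. -/
noncomputable def seifertMatrix (G : SimpleGraph V) {m : ℕ} (e : V ≃ Fin m) :
    Matrix (Fin m) (Fin m) ℤ := fun i j =>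
  if i = j then -1 else if i < j ∧ G.Adj (e.symm i) (e.symm j) then 1 else 0

/-- The Alexander polynomial `det (t S - Sᵀ)` of a graph with respect to an enumeration
of its vertices. -/
noncomputable def alexDet (G : SimpleGraph V) {m : ℕ} (e : V ≃ Fin m) : Polynomial ℤ :=
  let S : Matrix (Fin m) (Fin m) (Polynomial ℤ) :=
    (seifertMatrix G e).map fun a => (Polynomial.C a : Polynomial ℤ)
  ((X : Polynomial ℤ) • S - Sᵀ).det

/-- The Alexander polynomial of a graph (or forest), defined as the matching polynomial
`Σ_R t^{|R|} (1-t)^{V - 2|R|}`, the sum being over all matchings `R`. -/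
noncomputable def alexMatch (G : SimpleGraph V) : Polynomial ℤ :=
  ∑ R : {R : Finset (Sym2 V) // IsMatching G R},
    X ^ R.1.card * (1 - X) ^ (Fintype.card V - 2 * R.1.card)


/-- `extendRel G v b C₁ C` holds iff the configuration `C` of `G` is obtained from the
configuration `C₁` of `G ∖ {v}` by additionally assigning the sign `b` to `v`. -/
def extendRel (G : SimpleGraph V) (v : V) (b : Bool)
    (C₁ : Config (G.induce {x : V | x ≠ v})) (C : Config G) : Prop :=
  C.red = C₁.red.image (Sym2.map Subtype.val) ∧ C.sign v = some b ∧
    ∀ x : ↥{x : V | x ≠ v}, C.sign x.1 = C₁.sign x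

/-- `quotRel G v w C C₂` holds iff the edge `vw` is red in the configuration `C` of `G`
and `C₂` is the configuration of `G ∖ {v,w}` obtained from `C` by deleting `v`, `w`
and the red edge `vw`. -/
def quotRel (G : SimpleGraph V) (v w : V)
    (C : Config G) (C₂ : Config (G.induce {x : V | x ≠ v ∧ x ≠ w})) : Prop :=
  s(v, w) ∈ C.red ∧
    C₂.red.image (Sym2.map Subtype.val) = C.red.erase s(v, w) ∧
    ∀ x : ↥{x : V | x ≠ v ∧ x ≠ w}, C₂.sign x = C.sign x.1

/-- The first map of the short exact sequence: on basis configurations it extends a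
configuration of `T₁ = T ∖ {v}` in the first (resp. second) summand by a plus
(resp. minus) at `v`. -/
noncomputable def inclMap (G : SimpleGraph V) (v : V) (k₁ n₁ k₂ n₂ k n : ℤ) :
    (SC (G.induce {x : V | x ≠ v}) k₁ n₁ × SC (G.induce {x : V | x ≠ v}) k₂ n₂)
      →ₗ[ZMod 2] SC G k n :=
  LinearMap.coprod
    (sumLin fun C₁ C => extendRel G v true C₁.1 C.1)
    (sumLin fun C₁ C => extendRel G v false C₁.1 C.1)

/-- The second map of the short exact sequence: on basis configurations it deletes
`v`, `w` and the red edge `vw` (and kills configurations where `vw` is not red). -/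
noncomputable def projMap (G : SimpleGraph V) (v w : V) (k n k' n' : ℤ) :
    SC G k n →ₗ[ZMod 2] SC (G.induce {x : V | x ≠ v ∧ x ≠ w}) k' n' :=
  sumLin fun C C₂ => quotRel G v w C.1 C₂.1

set_option linter.unusedSectionVars false
set_option maxHeartbeats 1000000

section Helpers

lemma config_ext {G : SimpleGraph V} {C C' : Config G}
    (h1 : C.red = C'.red) (h2 : C.sign = C'.sign) : C = C' := by
  cases C; cases C'
  simp only at h1 h2
  subst h1; subst h2
  rfl

lemma sym2_exists_pair {α : Type*} (z : Sym2 α) : ∃ x y, z = s(x, y) :=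
  Sym2.ind (fun x y => ⟨x, y, rfl⟩) z

lemma mem_map_val {S : Set V} (x : ↥S) (e : Sym2 ↥S) :
    x.1 ∈ e.map Subtype.val ↔ x ∈ e := by
  rw [Sym2.mem_map]
  constructor
  · rintro ⟨y, hy, hyx⟩
    rwa [show y = x from Subtype.ext hyx] at hy
  · intro hx; exact ⟨x, hx, rfl⟩

lemma not_mem_map_val {S : Set V} {z : V} (hz : z ∉ S) (e : Sym2 ↥S) :
    z ∉ e.map Subtype.val := by
  rw [Sym2.mem_map]; rintro ⟨y, _, rfl⟩; exact hz y.2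

lemma sym2_map_val_inj {S : Set V} : Function.Injective (Sym2.map (Subtype.val : ↥S → V)) :=
  Sym2.map.injective Subtype.val_injective

lemma induce_edge {G : SimpleGraph V} {S : Set V} (e : Sym2 ↥S) :
    e ∈ (G.induce S).edgeSet ↔ e.map Subtype.val ∈ G.edgeSet := by
  obtain ⟨x, y, rfl⟩ := sym2_exists_pair e
  rw [Sym2.map_pair_eq, SimpleGraph.mem_edgeSet, SimpleGraph.mem_edgeSet]
  simp [SimpleGraph.comap_adj]

noncomputable def pullRed (S : Set V) (R : Finset (Sym2 V)) (h : ∀ e ∈ R, ∀ x ∈ e, x ∈ S) :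
    Finset (Sym2 ↥S) :=
  R.attach.image fun e => Sym2.attachWith e.1 (h e.1 e.2)

lemma pullRed_image (S : Set V) (R : Finset (Sym2 V)) (h : ∀ e ∈ R, ∀ x ∈ e, x ∈ S) :
    (pullRed S R h).image (Sym2.map Subtype.val) = R := by
  rw [pullRed, Finset.image_image]
  have : ((Sym2.map Subtype.val) ∘ fun (e : {x // x ∈ R}) => Sym2.attachWith e.1 (h e.1 e.2))
      = fun (e : {x // x ∈ R}) => e.1 := by
    funext e; exact Sym2.attachWith_map_subtypeVal _
  rw [this, Finset.attach_image_val]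

lemma mem_pullRed {S : Set V} {R : Finset (Sym2 V)} {h : ∀ e ∈ R, ∀ x ∈ e, x ∈ S}
    (e₂ : Sym2 ↥S) : e₂ ∈ pullRed S R h ↔ e₂.map Subtype.val ∈ R := by
  constructor
  · intro he
    rw [pullRed, Finset.mem_image] at he
    obtain ⟨e, _, rfl⟩ := he
    rw [Sym2.attachWith_map_subtypeVal]
    exact e.2
  · intro he
    rw [pullRed, Finset.mem_image]
    refine ⟨⟨e₂.map Subtype.val, he⟩, Finset.mem_attach _ _, ?_⟩
    apply sym2_map_val_inj
    rw [Sym2.attachWith_map_subtypeVal]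

lemma card_filter_subtype {S : Set V} [Fintype ↥S] (p : ↥S → Prop) (q : V → Prop)
    [DecidablePred p] [DecidablePred q]
    (hq : ∀ x : V, q x ↔ ∃ h : x ∈ S, p ⟨x, h⟩) :
    (Finset.univ.filter q).card = (Finset.univ.filter p).card := by
  refine (Finset.card_bij (fun (a : ↥S) _ => a.1) ?_ ?_ ?_).symm
  · intro a ha
    rw [Finset.mem_filter] at ha ⊢
    exact ⟨Finset.mem_univ _, (hq a.1).mpr ⟨a.2, ha.2⟩⟩
  · intro a _ a' _ hh
    exact Subtype.ext hh
  · intro x hx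
    rw [Finset.mem_filter] at hx
    obtain ⟨h, hp⟩ := (hq x).mp hx.2
    exact ⟨⟨x, h⟩, Finset.mem_filter.mpr ⟨Finset.mem_univ _, hp⟩, rfl⟩

end Helpers

section Main

variable {G : SimpleGraph V} {v w : V}

noncomputable def extendConfig (G : SimpleGraph V) (v : V) (b : Bool)
    (C₁ : Config (G.induce {x : V | x ≠ v})) : Config G where
  red := C₁.red.image (Sym2.map Subtype.val)
  matching := by
    constructor
    · intro e he
      rw [Finset.mem_image] at he
      obtain ⟨e₁, he₁, rfl⟩ := he
      exact (induce_edge _).mp (C₁.matching.1 e₁ he₁)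
    · intro e he f hf hef x hxe hxf
      rw [Finset.mem_image] at he hf
      obtain ⟨e₁, he₁, rfl⟩ := he
      obtain ⟨f₁, hf₁, rfl⟩ := hf
      rw [Sym2.mem_map] at hxe hxf
      obtain ⟨y, hy, rfl⟩ := hxe
      obtain ⟨y', hy', hy'x⟩ := hxf
      rw [show y' = y from Subtype.ext hy'x] at hy'
      exact C₁.matching.2 e₁ he₁ f₁ hf₁ (fun hh => hef (by rw [hh])) y hy hy'
  sign := fun x => if h : x = v then some b else C₁.sign ⟨x, h⟩
  sign_none := by
    intro x
    by_cases h : x = v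
    · rw [dif_pos h]
      constructor
      · intro hh; exact (Option.some_ne_none b hh).elim
      · rintro ⟨e, he, hxe⟩
        rw [Finset.mem_image] at he
        obtain ⟨e₁, he₁, rfl⟩ := he
        rw [Sym2.mem_map] at hxe
        obtain ⟨y, _, rfl⟩ := hxe
        exact absurd h y.2
    · rw [dif_neg h, C₁.sign_none ⟨x, h⟩]
      constructor
      · rintro ⟨e₁, he₁, hxe⟩
        exact ⟨e₁.map Subtype.val, Finset.mem_image_of_mem _ he₁,
          (mem_map_val ⟨x, h⟩ e₁).mpr hxe⟩
      · rintro ⟨e, he, hxe⟩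
        rw [Finset.mem_image] at he
        obtain ⟨e₁, he₁, rfl⟩ := he
        exact ⟨e₁, he₁, (mem_map_val ⟨x, h⟩ e₁).mp hxe⟩

@[simp] lemma extendConfig_red (b : Bool) (C₁ : Config (G.induce {x : V | x ≠ v})) :
    (extendConfig G v b C₁).red = C₁.red.image (Sym2.map Subtype.val) := rfl

@[simp] lemma extendConfig_sign (b : Bool) (C₁ : Config (G.induce {x : V | x ≠ v})) (x : V) :
    (extendConfig G v b C₁).sign x = if h : x = v then some b else C₁.sign ⟨x, h⟩ := rfl

lemma extendConfig_sign_v (b : Bool) (C₁ : Config (G.induce {x : V | x ≠ v})) :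
    (extendConfig G v b C₁).sign v = some b := dif_pos rfl

lemma extendConfig_sign_ne (b : Bool) (C₁ : Config (G.induce {x : V | x ≠ v}))
    (x : ↥{x : V | x ≠ v}) : (extendConfig G v b C₁).sign x.1 = C₁.sign x := by
  rw [extendConfig_sign, dif_neg x.2]

lemma extendRel_iff (b : Bool) (C₁ : Config (G.induce {x : V | x ≠ v})) (C : Config G) :
    extendRel G v b C₁ C ↔ C = extendConfig G v b C₁ := by
  constructor
  · rintro ⟨hred, hv', hsign⟩
    apply config_ext
    · rw [hred, extendConfig_red]
    · funext x
      rw [extendConfig_sign]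
      by_cases h : x = v
      · rw [dif_pos h, h, hv']
      · rw [dif_neg h]; exact hsign ⟨x, h⟩
  · rintro rfl
    exact ⟨rfl, extendConfig_sign_v b C₁, fun x => extendConfig_sign_ne b C₁ x⟩

lemma extendConfig_injective (b : Bool) :
    Function.Injective (extendConfig G v b) := by
  intro C₁ C₁' h
  apply config_ext
  · have h1 := congrArg Config.red h
    rw [extendConfig_red, extendConfig_red] at h1
    exact Finset.image_injective sym2_map_val_inj h1
  · funext x
    have h2 := congrArg (fun C => Config.sign C x.1) h
    simp only [extendConfig_sign] at h2
    rwa [dif_neg x.2, dif_neg x.2] at h2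

lemma red_avoid_v (C : Config G) (h : C.sign v ≠ none) :
    ∀ e ∈ C.red, ∀ x ∈ e, x ∈ {x : V | x ≠ v} := by
  intro e he x hx hxv
  subst hxv
  exact h ((C.sign_none x).mpr ⟨e, he, hx⟩)

noncomputable def restrictConfig (G : SimpleGraph V) (v : V) (C : Config G)
    (hC : ∀ e ∈ C.red, ∀ x ∈ e, x ∈ {x : V | x ≠ v}) :
    Config (G.induce {x : V | x ≠ v}) where
  red := pullRed _ C.red hC
  matching := by
    constructor
    · intro e he
      rw [mem_pullRed] at he
      exact (induce_edge _).mpr (C.matching.1 _ he)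
    · intro e he f hf hef x hxe hxf
      rw [mem_pullRed] at he hf
      exact C.matching.2 _ he _ hf (fun hh => hef (sym2_map_val_inj hh)) x.1
        ((mem_map_val x e).mpr hxe) ((mem_map_val x f).mpr hxf)
  sign := fun x => C.sign x.1
  sign_none := by
    intro x
    rw [C.sign_none x.1]
    constructor
    · rintro ⟨e, he, hxe⟩
      refine ⟨e.attachWith (hC e he), (mem_pullRed _).mpr ?_, ?_⟩
      · rwa [Sym2.attachWith_map_subtypeVal]
      · rw [← mem_map_val, Sym2.attachWith_map_subtypeVal]; exact hxe
    · rintro ⟨e₂, he₂, hxe₂⟩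
      rw [mem_pullRed] at he₂
      exact ⟨e₂.map Subtype.val, he₂, (mem_map_val x e₂).mpr hxe₂⟩

@[simp] lemma restrictConfig_red (C : Config G)
    (hC : ∀ e ∈ C.red, ∀ x ∈ e, x ∈ {x : V | x ≠ v}) :
    (restrictConfig G v C hC).red = pullRed _ C.red hC := rfl

@[simp] lemma restrictConfig_sign (C : Config G)
    (hC : ∀ e ∈ C.red, ∀ x ∈ e, x ∈ {x : V | x ≠ v}) (x : ↥{x : V | x ≠ v}) :
    (restrictConfig G v C hC).sign x = C.sign x.1 := rfl

lemma extend_restrict (b : Bool) (C : Config G)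
    (hC : ∀ e ∈ C.red, ∀ x ∈ e, x ∈ {x : V | x ≠ v}) (hb : C.sign v = some b) :
    extendConfig G v b (restrictConfig G v C hC) = C := by
  apply config_ext
  · rw [extendConfig_red, restrictConfig_red]
    exact pullRed_image _ _ _
  · funext x
    rw [extendConfig_sign]
    by_cases h : x = v
    · rw [dif_pos h, h, hb]
    · rw [dif_neg h, restrictConfig_sign]

end Main
section Main2

variable {G : SimpleGraph V} {v w : V}

lemma edge_with_v (hv : G.neighborSet v = {w}) {e : Sym2 V}
    (he : e ∈ G.edgeSet) (hve : v ∈ e) : e = s(v, w) := by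
  obtain ⟨x, y, rfl⟩ := sym2_exists_pair e
  rw [SimpleGraph.mem_edgeSet] at he
  rw [Sym2.mem_iff] at hve
  rcases hve with rfl | rfl
  · have h1 : y ∈ G.neighborSet v := he
    rw [hv, Set.mem_singleton_iff] at h1
    rw [h1]
  · have h1 : x ∈ G.neighborSet v := he.symm
    rw [hv, Set.mem_singleton_iff] at h1
    rw [h1, Sym2.eq_swap]

lemma mem_S2 {x : V} (h : ¬(x = v ∨ x = w)) : x ∈ {x : V | x ≠ v ∧ x ≠ w} :=
  ⟨fun hh => h (Or.inl hh), fun hh => h (Or.inr hh)⟩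

lemma vw_not_mem_image (C₂red : Finset (Sym2 ↥{x : V | x ≠ v ∧ x ≠ w})) :
    s(v, w) ∉ C₂red.image (Sym2.map Subtype.val) := by
  intro h
  rw [Finset.mem_image] at h
  obtain ⟨e₂, _, he⟩ := h
  have : v ∈ Sym2.map Subtype.val e₂ := by rw [he]; exact Sym2.mem_mk_left v w
  exact not_mem_map_val (fun hh => hh.1 rfl) e₂ this

noncomputable def unquotConfig (hadj : G.Adj v w)
    (C₂ : Config (G.induce {x : V | x ≠ v ∧ x ≠ w})) : Config G where
  red := insert s(v, w) (C₂.red.image (Sym2.map Subtype.val))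
  matching := by
    constructor
    · intro e he
      rw [Finset.mem_insert] at he
      rcases he with rfl | he
      · exact (SimpleGraph.mem_edgeSet G).mpr hadj
      · obtain ⟨e₂, he₂, rfl⟩ := Finset.mem_image.mp he
        exact (induce_edge _).mp (C₂.matching.1 e₂ he₂)
    · intro e he f hf hef x hxe hxf
      rw [Finset.mem_insert] at he hf
      rcases he with rfl | he <;> rcases hf with rfl | hf
      · exact hef rfl
      · obtain ⟨f₂, hf₂, rfl⟩ := Finset.mem_image.mp hf
        rw [Sym2.mem_iff] at hxe
        refine not_mem_map_val ?_ f₂ hxf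
        rcases hxe with rfl | rfl
        · exact fun hh => hh.1 rfl
        · exact fun hh => hh.2 rfl
      · obtain ⟨e₂, he₂, rfl⟩ := Finset.mem_image.mp he
        rw [Sym2.mem_iff] at hxf
        refine absurd hxe (not_mem_map_val ?_ e₂)
        rcases hxf with rfl | rfl
        · exact fun hh => hh.1 rfl
        · exact fun hh => hh.2 rfl
      · obtain ⟨e₂, he₂, rfl⟩ := Finset.mem_image.mp he
        obtain ⟨f₂, hf₂, rfl⟩ := Finset.mem_image.mp hf
        rw [Sym2.mem_map] at hxe hxf
        obtain ⟨y, hy, rfl⟩ := hxe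
        obtain ⟨y', hy', hy'x⟩ := hxf
        rw [show y' = y from Subtype.ext hy'x] at hy'
        exact C₂.matching.2 e₂ he₂ f₂ hf₂ (fun hh => hef (by rw [hh])) y hy hy'
  sign := fun x => if h : x = v ∨ x = w then none else C₂.sign ⟨x, mem_S2 h⟩
  sign_none := by
    intro x
    by_cases h : x = v ∨ x = w
    · rw [dif_pos h]
      refine iff_of_true rfl ⟨s(v, w), Finset.mem_insert_self _ _, ?_⟩
      rw [Sym2.mem_iff]; exact h
    · rw [dif_neg h, C₂.sign_none ⟨x, mem_S2 h⟩]
      constructor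
      · rintro ⟨e₂, he₂, hxe⟩
        exact ⟨e₂.map Subtype.val,
          Finset.mem_insert_of_mem (Finset.mem_image_of_mem _ he₂),
          (mem_map_val ⟨x, mem_S2 h⟩ e₂).mpr hxe⟩
      · rintro ⟨e, he, hxe⟩
        rw [Finset.mem_insert] at he
        rcases he with rfl | he
        · rw [Sym2.mem_iff] at hxe; exact absurd hxe h
        · obtain ⟨e₂, he₂, rfl⟩ := Finset.mem_image.mp he
          exact ⟨e₂, he₂, (mem_map_val ⟨x, mem_S2 h⟩ e₂).mp hxe⟩

@[simp] lemma unquotConfig_red (hadj : G.Adj v w)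
    (C₂ : Config (G.induce {x : V | x ≠ v ∧ x ≠ w})) :
    (unquotConfig hadj C₂).red = insert s(v, w) (C₂.red.image (Sym2.map Subtype.val)) := rfl

@[simp] lemma unquotConfig_sign (hadj : G.Adj v w)
    (C₂ : Config (G.induce {x : V | x ≠ v ∧ x ≠ w})) (x : V) :
    (unquotConfig hadj C₂).sign x
      = if h : x = v ∨ x = w then none else C₂.sign ⟨x, mem_S2 h⟩ := rfl

lemma unquotConfig_sign_ne (hadj : G.Adj v w)
    (C₂ : Config (G.induce {x : V | x ≠ v ∧ x ≠ w})) (x : ↥{x : V | x ≠ v ∧ x ≠ w}) :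
    (unquotConfig hadj C₂).sign x.1 = C₂.sign x := by
  rw [unquotConfig_sign, dif_neg (by rw [not_or]; exact ⟨x.2.1, x.2.2⟩)]

lemma unquotConfig_sign_v (hadj : G.Adj v w)
    (C₂ : Config (G.induce {x : V | x ≠ v ∧ x ≠ w})) :
    (unquotConfig hadj C₂).sign v = none := dif_pos (Or.inl rfl)

lemma unquotConfig_injective (hadj : G.Adj v w) :
    Function.Injective (unquotConfig hadj) := by
  intro A B h
  apply config_ext
  · have h1 := congrArg Config.red h
    rw [unquotConfig_red, unquotConfig_red] at h1
    apply Finset.image_injective sym2_map_val_inj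
    have h2 := congrArg (fun sss => Finset.erase sss s(v, w)) h1
    rwa [Finset.erase_insert (vw_not_mem_image A.red),
      Finset.erase_insert (vw_not_mem_image B.red)] at h2
  · funext x
    have h2 := congrArg (fun C => Config.sign C x.1) h
    rwa [unquotConfig_sign_ne, unquotConfig_sign_ne] at h2

lemma quot_red_avoid (hv : G.neighborSet v = {w}) (C : Config G) (hC : s(v, w) ∈ C.red) :
    ∀ e ∈ C.red.erase s(v, w), ∀ x ∈ e, x ∈ {x : V | x ≠ v ∧ x ≠ w} := by
  intro e he x hx
  rw [Finset.mem_erase] at he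
  constructor
  · rintro rfl
    exact he.1 (edge_with_v hv (C.matching.1 e he.2) hx)
  · rintro rfl
    exact C.matching.2 e he.2 s(v, x) hC he.1 x hx (Sym2.mem_mk_right v x)

noncomputable def quotConfig (hv : G.neighborSet v = {w}) (C : Config G)
    (hC : s(v, w) ∈ C.red) : Config (G.induce {x : V | x ≠ v ∧ x ≠ w}) where
  red := pullRed _ (C.red.erase s(v, w)) (quot_red_avoid hv C hC)
  matching := by
    constructor
    · intro e he
      rw [mem_pullRed] at he
      exact (induce_edge _).mpr (C.matching.1 _ (Finset.mem_of_mem_erase he))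
    · intro e he f hf hef x hxe hxf
      rw [mem_pullRed] at he hf
      exact C.matching.2 _ (Finset.mem_of_mem_erase he) _ (Finset.mem_of_mem_erase hf)
        (fun hh => hef (sym2_map_val_inj hh)) x.1
        ((mem_map_val x e).mpr hxe) ((mem_map_val x f).mpr hxf)
  sign := fun x => C.sign x.1
  sign_none := by
    intro x
    rw [C.sign_none x.1]
    constructor
    · rintro ⟨e, he, hxe⟩
      have hne : e ≠ s(v, w) := by
        rintro rfl
        rw [Sym2.mem_iff] at hxe
        rcases hxe with h | h
        · exact x.2.1 h
        · exact x.2.2 h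
      have he' : e ∈ C.red.erase s(v, w) := Finset.mem_erase.mpr ⟨hne, he⟩
      refine ⟨e.attachWith (quot_red_avoid hv C hC e he'), (mem_pullRed _).mpr ?_, ?_⟩
      · rwa [Sym2.attachWith_map_subtypeVal]
      · rw [← mem_map_val, Sym2.attachWith_map_subtypeVal]; exact hxe
    · rintro ⟨e₂, he₂, hxe₂⟩
      rw [mem_pullRed] at he₂
      exact ⟨e₂.map Subtype.val, Finset.mem_of_mem_erase he₂,
        (mem_map_val x e₂).mpr hxe₂⟩

@[simp] lemma quotConfig_red (hv : G.neighborSet v = {w}) (C : Config G)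
    (hC : s(v, w) ∈ C.red) :
    (quotConfig hv C hC).red = pullRed _ (C.red.erase s(v, w)) (quot_red_avoid hv C hC) := rfl

@[simp] lemma quotConfig_sign (hv : G.neighborSet v = {w}) (C : Config G)
    (hC : s(v, w) ∈ C.red) (x : ↥{x : V | x ≠ v ∧ x ≠ w}) :
    (quotConfig hv C hC).sign x = C.sign x.1 := rfl

lemma unquot_quot (hadj : G.Adj v w) (hv : G.neighborSet v = {w}) (C : Config G)
    (hC : s(v, w) ∈ C.red) : unquotConfig hadj (quotConfig hv C hC) = C := by
  apply config_ext
  · rw [unquotConfig_red, quotConfig_red, pullRed_image, Finset.insert_erase hC]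
  · funext x
    rw [unquotConfig_sign]
    by_cases h : x = v ∨ x = w
    · rw [dif_pos h]
      symm
      rw [C.sign_none x]
      refine ⟨s(v, w), hC, ?_⟩
      rw [Sym2.mem_iff]; exact h
    · rw [dif_neg h, quotConfig_sign]

lemma quotRel_iff (hadj : G.Adj v w) (C : Config G)
    (C₂ : Config (G.induce {x : V | x ≠ v ∧ x ≠ w})) :
    quotRel G v w C C₂ ↔ C = unquotConfig hadj C₂ := by
  constructor
  · rintro ⟨hmem, hred, hsign⟩
    apply config_ext
    · rw [unquotConfig_red, hred, Finset.insert_erase hmem]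
    · funext x
      rw [unquotConfig_sign]
      by_cases h : x = v ∨ x = w
      · rw [dif_pos h]
        rw [C.sign_none x]
        refine ⟨s(v, w), hmem, ?_⟩
        rw [Sym2.mem_iff]; exact h
      · rw [dif_neg h]
        exact (hsign ⟨x, mem_S2 h⟩).symm
  · rintro rfl
    refine ⟨Finset.mem_insert_self _ _, ?_, ?_⟩
    · rw [unquotConfig_red, Finset.erase_insert (vw_not_mem_image C₂.red)]
    · intro x
      exact (unquotConfig_sign_ne hadj C₂ x).symm

lemma Qg_extend_true (C₁ : Config (G.induce {x : V | x ≠ v})) :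
    Qg (extendConfig G v true C₁) = Qg C₁ := by
  unfold Qg
  apply card_filter_subtype
  intro x
  by_cases h : x = v
  · rw [extendConfig_sign, dif_pos h]
    constructor
    · intro hh; exact absurd hh (by simp)
    · rintro ⟨h', _⟩; exact absurd h h'
  · rw [extendConfig_sign, dif_neg h]
    exact ⟨fun hp => ⟨h, hp⟩, fun ⟨h', hp⟩ => hp⟩

lemma Qg_extend_false (C₁ : Config (G.induce {x : V | x ≠ v})) :
    Qg (extendConfig G v false C₁) = Qg C₁ + 1 := by
  unfold Qg
  have h1 : (Finset.univ.filter fun x : V => (extendConfig G v false C₁).sign x = some false)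
      = insert v (Finset.univ.filter fun x : V =>
          ∃ h : x ∈ {x : V | x ≠ v}, C₁.sign ⟨x, h⟩ = some false) := by
    ext x
    simp only [Finset.mem_insert, Finset.mem_filter, Finset.mem_univ, true_and]
    by_cases h : x = v
    · rw [extendConfig_sign, dif_pos h]
      simp [h]
    · rw [extendConfig_sign, dif_neg h]
      constructor
      · intro hp; exact Or.inr ⟨h, hp⟩
      · rintro (rfl | ⟨h', hp⟩)
        · exact absurd rfl h
        · exact hp
  have h2 := card_filter_subtype (S := {x : V | x ≠ v})
    (fun x => C₁.sign x = some false)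
    (fun x => ∃ h : x ∈ {x : V | x ≠ v}, C₁.sign ⟨x, h⟩ = some false)
    (fun x => Iff.rfl)
  rw [h1, Finset.card_insert_of_notMem (by
      rw [Finset.mem_filter]
      rintro ⟨_, h', _⟩
      exact h' rfl), h2]

lemma red_card_extend (b : Bool) (C₁ : Config (G.induce {x : V | x ≠ v})) :
    (extendConfig G v b C₁).red.card = C₁.red.card :=
  Finset.card_image_of_injective _ sym2_map_val_inj

lemma Eg_extend_true (C₁ : Config (G.induce {x : V | x ≠ v})) :
    Eg (extendConfig G v true C₁) = Eg C₁ := by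
  unfold Eg; rw [Qg_extend_true, red_card_extend]

lemma Eg_extend_false (C₁ : Config (G.induce {x : V | x ≠ v})) :
    Eg (extendConfig G v false C₁) = Eg C₁ + 1 := by
  unfold Eg; rw [Qg_extend_false, red_card_extend]; omega

lemma Qg_unquot (hadj : G.Adj v w) (C₂ : Config (G.induce {x : V | x ≠ v ∧ x ≠ w})) :
    Qg (unquotConfig hadj C₂) = Qg C₂ := by
  unfold Qg
  apply card_filter_subtype
  intro x
  by_cases h : x = v ∨ x = w
  · rw [unquotConfig_sign, dif_pos h]
    constructor
    · intro hh; exact absurd hh (by simp)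
    · rintro ⟨h', _⟩
      rcases h with rfl | rfl
      · exact absurd rfl h'.1
      · exact absurd rfl h'.2
  · rw [unquotConfig_sign, dif_neg h]
    exact ⟨fun hp => ⟨mem_S2 h, hp⟩, fun ⟨h', hp⟩ => hp⟩

lemma Eg_unquot (hadj : G.Adj v w) (C₂ : Config (G.induce {x : V | x ≠ v ∧ x ≠ w})) :
    Eg (unquotConfig hadj C₂) = Eg C₂ + 1 := by
  unfold Eg
  rw [Qg_unquot, unquotConfig_red,
    Finset.card_insert_of_notMem (vw_not_mem_image C₂.red),
    Finset.card_image_of_injective _ sym2_map_val_inj]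
  omega

end Main2
section Main3

variable {G : SimpleGraph V} {v w : V}

lemma erase_eq_erase {α : Type*} (i1 i2 : DecidableEq α) (s : Finset α) (a : α) :
    @Finset.erase α i1 s a = @Finset.erase α i2 s a := by
  cases Subsingleton.elim i1 i2; rfl

lemma image_erase_any {α β : Type*} (i1 : DecidableEq α) (i2 i3 : DecidableEq β)
    {f : α → β} (hf : Function.Injective f) (s : Finset α) (a : α) :
    @Finset.image α β i2 f (@Finset.erase α i1 s a)
      = @Finset.erase β i3 (@Finset.image α β i2 f s) (f a) := by
  cases Subsingleton.elim i1 (Classical.decEq α)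
  cases Subsingleton.elim i2 i3
  exact Finset.image_erase hf s a

lemma DStep_sign_eq {C C' : Config G} (h : DStep C C') {x : V} (hx : C.sign x ≠ none) :
    C'.sign x = C.sign x := by
  obtain ⟨e, he, _, hoff, _⟩ := h
  exact hoff x fun hxe => hx ((C.sign_none x).mpr ⟨e, he, hxe⟩)

lemma DStep_red_subset {C C' : Config G} (h : DStep C C') : C'.red ⊆ C.red := by
  obtain ⟨e, _, hred, _, _⟩ := h
  rw [hred]
  exact Finset.erase_subset _ _

lemma DStep_extend_iff (b : Bool) (X X' : Config (G.induce {x : V | x ≠ v})) :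
    DStep (extendConfig G v b X) (extendConfig G v b X') ↔ DStep X X' := by
  constructor
  · rintro ⟨eb, heb, hred, hoff, u, u', huv, hsu, hsu'⟩
    rw [extendConfig_red, Finset.mem_image] at heb
    obtain ⟨e, he, rfl⟩ := heb
    have hred' : ∀ (i : DecidableEq (Sym2 ↥{x : V | x ≠ v})), X'.red = @Finset.erase _ i X.red e := by
      intro i
      apply Finset.image_injective sym2_map_val_inj
      rw [← extendConfig_red (v := v) b X', hred, extendConfig_red,
        image_erase_any i _ _ sym2_map_val_inj]
    have hoff' : ∀ x, x ∉ e → X'.sign x = X.sign x := by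
      intro x hx
      have h1 := hoff x.1 (fun hc => hx ((mem_map_val x e).mp hc))
      rwa [extendConfig_sign_ne, extendConfig_sign_ne] at h1
    obtain ⟨p, q, rfl⟩ := sym2_exists_pair e
    rw [Sym2.map_pair_eq, Sym2.eq_iff] at huv
    rcases huv with ⟨hpu, hqu⟩ | ⟨hpu, hqu⟩
    · refine ⟨s(p, q), he, hred' _, hoff', p, q, rfl, ?_, ?_⟩
      · rw [← extendConfig_sign_ne b X' p, hpu]; exact hsu
      · rw [← extendConfig_sign_ne b X' q, hqu]; exact hsu'
    · refine ⟨s(p, q), he, hred' _, hoff', q, p, Sym2.eq_swap, ?_, ?_⟩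
      · rw [← extendConfig_sign_ne b X' q, hqu]; exact hsu
      · rw [← extendConfig_sign_ne b X' p, hpu]; exact hsu'
  · rintro ⟨e, he, hred, hoff, p, q, heq, hsp, hsq⟩
    subst heq
    refine ⟨Sym2.map Subtype.val s(p, q), Finset.mem_image_of_mem _ he, ?_, ?_,
      p.1, q.1, Sym2.map_pair_eq _ _ _, ?_, ?_⟩
    · rw [extendConfig_red, extendConfig_red, hred, image_erase_any _ _ _ sym2_map_val_inj]
    · intro x hx
      by_cases h : x = v
      · rw [extendConfig_sign, extendConfig_sign, dif_pos h, dif_pos h]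
      · rw [extendConfig_sign, extendConfig_sign, dif_neg h, dif_neg h]
        exact hoff ⟨x, h⟩ (fun hc => hx ((mem_map_val ⟨x, h⟩ _).mpr hc))
    · rw [extendConfig_sign_ne]; exact hsp
    · rw [extendConfig_sign_ne]; exact hsq

lemma map_pair_ne_vw (p q : ↥{x : V | x ≠ v ∧ x ≠ w}) :
    Sym2.map Subtype.val s(p, q) ≠ s(v, w) := by
  intro hcontra
  apply not_mem_map_val (S := {x : V | x ≠ v ∧ x ≠ w}) (fun hh => hh.1 rfl) s(p, q)
  rw [hcontra]
  exact Sym2.mem_mk_left v w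

lemma DStep_unquot_iff (hadj : G.Adj v w)
    (A A' : Config (G.induce {x : V | x ≠ v ∧ x ≠ w})) :
    DStep (unquotConfig hadj A) (unquotConfig hadj A') ↔ DStep A A' := by
  constructor
  · rintro ⟨eb, heb, hred, hoff, u, u', huv, hsu, hsu'⟩
    have hne : eb ≠ s(v, w) := by
      intro hc
      have hu : u ∈ eb := by rw [huv]; exact Sym2.mem_mk_left u u'
      rw [hc, Sym2.mem_iff] at hu
      rw [unquotConfig_sign, dif_pos hu] at hsu
      exact (Option.some_ne_none true hsu.symm).elim
    rw [unquotConfig_red, Finset.mem_insert] at heb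
    rcases heb with h | heb
    · exact absurd h hne
    obtain ⟨e, he, rfl⟩ := Finset.mem_image.mp heb
    have hred' : ∀ (i : DecidableEq (Sym2 ↥{x : V | x ≠ v ∧ x ≠ w})),
        A'.red = @Finset.erase _ i A.red e := by
      intro i
      apply Finset.image_injective sym2_map_val_inj
      have h3 := hred
      rw [unquotConfig_red, unquotConfig_red,
        Finset.erase_insert_of_ne (fun h => hne h.symm),
        ← image_erase_any i _ _ sym2_map_val_inj] at h3
      have h4 := congrArg (fun s => Finset.erase s s(v, w)) h3
      rwa [Finset.erase_insert (vw_not_mem_image A'.red),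
        Finset.erase_insert (vw_not_mem_image (A.red.erase e))] at h4
    have hoff' : ∀ x, x ∉ e → A'.sign x = A.sign x := by
      intro x hx
      have h1 := hoff x.1 (fun hc => hx ((mem_map_val x e).mp hc))
      rwa [unquotConfig_sign_ne, unquotConfig_sign_ne] at h1
    obtain ⟨p, q, rfl⟩ := sym2_exists_pair e
    rw [Sym2.map_pair_eq, Sym2.eq_iff] at huv
    rcases huv with ⟨hpu, hqu⟩ | ⟨hpu, hqu⟩
    · refine ⟨s(p, q), he, hred' _, hoff', p, q, rfl, ?_, ?_⟩
      · rw [← unquotConfig_sign_ne hadj A' p, hpu]; exact hsu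
      · rw [← unquotConfig_sign_ne hadj A' q, hqu]; exact hsu'
    · refine ⟨s(p, q), he, hred' _, hoff', q, p, Sym2.eq_swap, ?_, ?_⟩
      · rw [← unquotConfig_sign_ne hadj A' q, hqu]; exact hsu
      · rw [← unquotConfig_sign_ne hadj A' p, hpu]; exact hsu'
  · rintro ⟨e, he, hred, hoff, p, q, heq, hsp, hsq⟩
    subst heq
    refine ⟨Sym2.map Subtype.val s(p, q),
      Finset.mem_insert_of_mem (Finset.mem_image_of_mem _ he), ?_, ?_,
      p.1, q.1, Sym2.map_pair_eq _ _ _, ?_, ?_⟩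
    · rw [unquotConfig_red, unquotConfig_red, hred,
        image_erase_any _ _ _ sym2_map_val_inj,
        Finset.erase_insert_of_ne (fun h => (map_pair_ne_vw p q) h.symm)]
    · intro x hx
      by_cases h : x = v ∨ x = w
      · rw [unquotConfig_sign, unquotConfig_sign, dif_pos h, dif_pos h]
      · rw [unquotConfig_sign, unquotConfig_sign, dif_neg h, dif_neg h]
        exact hoff ⟨x, mem_S2 h⟩ (fun hc => hx ((mem_map_val ⟨x, mem_S2 h⟩ _).mpr hc))
    · rw [unquotConfig_sign_ne]; exact hsp
    · rw [unquotConfig_sign_ne]; exact hsq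

end Main3
section SumLin

variable {α β : Type} [Fintype α] [Fintype β]

lemma sumLin_apply (r : α → β → Prop) (f : α → ZMod 2) (b : β) :
    sumLin r f b = ∑ a : α, if r a b then f a else 0 := rfl

lemma sumLin_graph {g : α → β} (hg : Function.Injective g) {r : α → β → Prop}
    (hr : ∀ a b, r a b ↔ g a = b) (f : α → ZMod 2) :
    sumLin r f = Function.extend g f 0 := by
  funext b
  rw [sumLin_apply]
  by_cases hb : ∃ a, g a = b
  · obtain ⟨a, rfl⟩ := hb
    rw [hg.extend_apply]
    rw [Finset.sum_eq_single a]
    · rw [if_pos ((hr a (g a)).mpr rfl)]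
    · intro a' _ ha'
      rw [if_neg (fun h => ha' (hg ((hr a' (g a)).mp h)))]
    · intro h; exact absurd (Finset.mem_univ a) h
  · rw [Function.extend_apply' _ _ _ hb]
    refine (Finset.sum_eq_zero ?_).trans rfl
    intro a _
    rw [if_neg (fun h => hb ⟨a, (hr a b).mp h⟩)]

lemma sumLin_cograph {h : β → α} {r : α → β → Prop}
    (hr : ∀ a b, r a b ↔ a = h b) (f : α → ZMod 2) (b : β) :
    sumLin r f b = f (h b) := by
  rw [sumLin_apply, Finset.sum_eq_single (h b)]
  · rw [if_pos ((hr _ _).mpr rfl)]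
  · intro a _ ha
    rw [if_neg (fun hh => ha ((hr a b).mp hh))]
  · intro hh; exact absurd (Finset.mem_univ _) hh

lemma sum_if_extend {g : α → β} (hg : Function.Injective g) (p : β → Prop)
    (f : α → ZMod 2) :
    (∑ b : β, if p b then Function.extend g f 0 b else 0)
      = ∑ a : α, if p (g a) then f a else 0 := by
  have h1 : (∑ b : β, if p b then Function.extend g f 0 b else 0)
      = ∑ b ∈ Finset.univ.image g, (if p b then Function.extend g f 0 b else 0) := by
    refine (Finset.sum_subset (Finset.subset_univ _) ?_).symm
    intro b _ hb
    have hnb : ¬∃ a, g a = b := by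
      rintro ⟨a, ha⟩
      exact hb (Finset.mem_image.mpr ⟨a, Finset.mem_univ a, ha⟩)
    rw [Function.extend_apply' _ _ _ hnb]
    simp
  rw [h1, Finset.sum_image (fun a _ a' _ h => hg h)]
  refine Finset.sum_congr rfl fun a _ => ?_
  rw [hg.extend_apply]

lemma sum_if_range {g : α → β} (hg : Function.Injective g) {p : β → Prop}
    (hp : ∀ b, p b → ∃ a, g a = b) (t : β → ZMod 2) :
    (∑ b : β, if p b then t b else 0) = ∑ a : α, if p (g a) then t (g a) else 0 := by
  have h1 : (∑ b : β, if p b then t b else 0)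
      = ∑ b ∈ Finset.univ.image g, (if p b then t b else 0) := by
    refine (Finset.sum_subset (Finset.subset_univ _) ?_).symm
    intro b _ hb
    rw [if_neg]
    intro hpb
    obtain ⟨a, ha⟩ := hp b hpb
    exact hb (Finset.mem_image.mpr ⟨a, Finset.mem_univ a, ha⟩)
  rw [h1, Finset.sum_image (fun a _ a' _ h => hg h)]

end SumLin

section Graded

variable {G : SimpleGraph V} {v w : V}

noncomputable def gextT (G : SimpleGraph V) (v : V) (k n : ℤ)
    (A : {C : Config (G.induce {x : V | x ≠ v}) // (Qg C : ℤ) = k ∧ (Eg C : ℤ) = n}) :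
    {C : Config G // (Qg C : ℤ) = k ∧ (Eg C : ℤ) = n} :=
  ⟨extendConfig G v true A.1,
    by rw [Qg_extend_true]; exact A.2.1,
    by rw [Eg_extend_true]; exact A.2.2⟩

noncomputable def gextF (G : SimpleGraph V) (v : V) (k n k' n' : ℤ)
    (hk : k' = k + 1) (hn : n' = n + 1)
    (A : {C : Config (G.induce {x : V | x ≠ v}) // (Qg C : ℤ) = k ∧ (Eg C : ℤ) = n}) :
    {C : Config G // (Qg C : ℤ) = k' ∧ (Eg C : ℤ) = n'} :=
  ⟨extendConfig G v false A.1,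
    by rw [Qg_extend_false]; push_cast; rw [A.2.1, hk],
    by rw [Eg_extend_false]; push_cast; rw [A.2.2, hn]⟩

noncomputable def gunquot (hadj : G.Adj v w) (k n k' n' : ℤ)
    (hk : k' = k) (hn : n' = n + 1)
    (A : {C : Config (G.induce {x : V | x ≠ v ∧ x ≠ w}) //
      (Qg C : ℤ) = k ∧ (Eg C : ℤ) = n}) :
    {C : Config G // (Qg C : ℤ) = k' ∧ (Eg C : ℤ) = n'} :=
  ⟨unquotConfig hadj A.1,
    by rw [Qg_unquot]; rw [A.2.1, hk],
    by rw [Eg_unquot]; push_cast; rw [A.2.2, hn]⟩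

lemma gextT_inj (k n : ℤ) : Function.Injective (gextT G v k n) :=
  fun A B h => Subtype.ext (extendConfig_injective true (congrArg Subtype.val h))

lemma gextF_inj (k n k' n' : ℤ) (hk : k' = k + 1) (hn : n' = n + 1) :
    Function.Injective (gextF G v k n k' n' hk hn) :=
  fun A B h => Subtype.ext (extendConfig_injective false (congrArg Subtype.val h))

lemma gunquot_inj (hadj : G.Adj v w) (k n k' n' : ℤ) (hk : k' = k) (hn : n' = n + 1) :
    Function.Injective (gunquot hadj k n k' n' hk hn) :=
  fun A B h => Subtype.ext (unquotConfig_injective hadj (congrArg Subtype.val h))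

lemma gextT_surj (k n : ℤ) (C : {C : Config G // (Qg C : ℤ) = k ∧ (Eg C : ℤ) = n})
    (hb : C.1.sign v = some true) : ∃ A, gextT G v k n A = C := by
  have hC := red_avoid_v C.1 (v := v) (by rw [hb]; simp)
  have hre : extendConfig G v true (restrictConfig G v C.1 hC) = C.1 :=
    extend_restrict true C.1 hC hb
  have hq : Qg C.1 = Qg (restrictConfig G v C.1 hC) := by
    conv_lhs => rw [← hre]
    rw [Qg_extend_true]
  have he : Eg C.1 = Eg (restrictConfig G v C.1 hC) := by
    conv_lhs => rw [← hre]
    rw [Eg_extend_true]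
  refine ⟨⟨restrictConfig G v C.1 hC, ?_, ?_⟩, Subtype.ext hre⟩
  · rw [← hq]; exact C.2.1
  · rw [← he]; exact C.2.2

lemma gextF_surj (k n k' n' : ℤ) (hk : k' = k + 1) (hn : n' = n + 1)
    (C : {C : Config G // (Qg C : ℤ) = k' ∧ (Eg C : ℤ) = n'})
    (hb : C.1.sign v = some false) : ∃ A, gextF G v k n k' n' hk hn A = C := by
  have hC := red_avoid_v C.1 (v := v) (by rw [hb]; simp)
  have hre : extendConfig G v false (restrictConfig G v C.1 hC) = C.1 :=
    extend_restrict false C.1 hC hb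
  have hq : Qg C.1 = Qg (restrictConfig G v C.1 hC) + 1 := by
    conv_lhs => rw [← hre]
    rw [Qg_extend_false]
  have he : Eg C.1 = Eg (restrictConfig G v C.1 hC) + 1 := by
    conv_lhs => rw [← hre]
    rw [Eg_extend_false]
  have h1 := C.2.1
  have h2 := C.2.2
  rw [hq] at h1
  rw [he] at h2
  push_cast at h1 h2
  refine ⟨⟨restrictConfig G v C.1 hC, ?_, ?_⟩, Subtype.ext hre⟩
  · omega
  · omega

lemma gunquot_surj (hadj : G.Adj v w) (hv : G.neighborSet v = {w})
    (k n k' n' : ℤ) (hk : k' = k) (hn : n' = n + 1)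
    (C : {C : Config G // (Qg C : ℤ) = k' ∧ (Eg C : ℤ) = n'})
    (hr : s(v, w) ∈ C.1.red) : ∃ A, gunquot hadj k n k' n' hk hn A = C := by
  have hre : unquotConfig hadj (quotConfig hv C.1 hr) = C.1 := unquot_quot hadj hv C.1 hr
  have hq : Qg C.1 = Qg (quotConfig hv C.1 hr) := by
    conv_lhs => rw [← hre]
    rw [Qg_unquot]
  have he : Eg C.1 = Eg (quotConfig hv C.1 hr) + 1 := by
    conv_lhs => rw [← hre]
    rw [Eg_unquot]
  have h1 := C.2.1
  have h2 := C.2.2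
  rw [hq] at h1
  rw [he] at h2
  push_cast at h2
  refine ⟨⟨quotConfig hv C.1 hr, ?_, ?_⟩, Subtype.ext hre⟩
  · omega
  · omega

lemma not_range_gextT (k n : ℤ) (C : {C : Config G // (Qg C : ℤ) = k ∧ (Eg C : ℤ) = n})
    (hb : C.1.sign v ≠ some true) : ¬∃ A, gextT G v k n A = C := by
  rintro ⟨A, rfl⟩
  exact hb (extendConfig_sign_v true A.1)

lemma not_range_gextF (k n k' n' : ℤ) (hk : k' = k + 1) (hn : n' = n + 1)
    (C : {C : Config G // (Qg C : ℤ) = k' ∧ (Eg C : ℤ) = n'})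
    (hb : C.1.sign v ≠ some false) : ¬∃ A, gextF G v k n k' n' hk hn A = C := by
  rintro ⟨A, rfl⟩
  exact hb (extendConfig_sign_v false A.1)

lemma not_range_gunquot (hadj : G.Adj v w) (k n k' n' : ℤ) (hk : k' = k) (hn : n' = n + 1)
    (C : {C : Config G // (Qg C : ℤ) = k' ∧ (Eg C : ℤ) = n'})
    (hb : C.1.sign v ≠ none) : ¬∃ A, gunquot hadj k n k' n' hk hn A = C := by
  rintro ⟨A, rfl⟩
  exact hb (unquotConfig_sign_v hadj A.1)

lemma sumLin_extT (k n : ℤ) (f) :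
    sumLin (fun (C₁ : {C : Config (G.induce {x : V | x ≠ v}) //
        (Qg C : ℤ) = k ∧ (Eg C : ℤ) = n})
      (C : {C : Config G // (Qg C : ℤ) = k ∧ (Eg C : ℤ) = n}) =>
        extendRel G v true C₁.1 C.1) f
      = Function.extend (gextT G v k n) f 0 := by
  refine sumLin_graph (gextT_inj k n) (fun A C => ?_) f
  rw [extendRel_iff]
  exact ⟨fun h => (Subtype.ext h).symm, fun h => (congrArg Subtype.val h).symm⟩

lemma sumLin_extF (k n k' n' : ℤ) (hk : k' = k + 1) (hn : n' = n + 1) (f) :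
    sumLin (fun (C₁ : {C : Config (G.induce {x : V | x ≠ v}) //
        (Qg C : ℤ) = k ∧ (Eg C : ℤ) = n})
      (C : {C : Config G // (Qg C : ℤ) = k' ∧ (Eg C : ℤ) = n'}) =>
        extendRel G v false C₁.1 C.1) f
      = Function.extend (gextF G v k n k' n' hk hn) f 0 := by
  refine sumLin_graph (gextF_inj k n k' n' hk hn) (fun A C => ?_) f
  rw [extendRel_iff]
  exact ⟨fun h => (Subtype.ext h).symm, fun h => (congrArg Subtype.val h).symm⟩

lemma sumLin_quot (hadj : G.Adj v w) (k n k' n' : ℤ) (hk : k' = k) (hn : n' = n + 1) (f)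
    (C₂ : {C : Config (G.induce {x : V | x ≠ v ∧ x ≠ w}) //
      (Qg C : ℤ) = k ∧ (Eg C : ℤ) = n}) :
    sumLin (fun (C : {C : Config G // (Qg C : ℤ) = k' ∧ (Eg C : ℤ) = n'})
      (C₂ : {C : Config (G.induce {x : V | x ≠ v ∧ x ≠ w}) //
        (Qg C : ℤ) = k ∧ (Eg C : ℤ) = n}) => quotRel G v w C.1 C₂.1) f C₂
      = f (gunquot hadj k n k' n' hk hn C₂) := by
  refine sumLin_cograph (fun C B => ?_) f C₂
  rw [quotRel_iff hadj]
  exact ⟨fun h => Subtype.ext h, fun h => congrArg Subtype.val h⟩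

end Graded

section GradedSign

variable {G : SimpleGraph V} {v w : V}

lemma gextT_sv (k n : ℤ) (A) : ((gextT G v k n A).1).sign v = some true :=
  extendConfig_sign_v true A.1

lemma gextF_sv (k n k' n' : ℤ) (hk : k' = k + 1) (hn : n' = n + 1) (A) :
    ((gextF G v k n k' n' hk hn A).1).sign v = some false :=
  extendConfig_sign_v false A.1

lemma gunquot_sv (hadj : G.Adj v w) (k n k' n' : ℤ) (hk : k' = k) (hn : n' = n + 1) (A) :
    ((gunquot hadj k n k' n' hk hn A).1).sign v = none :=
  unquotConfig_sign_v hadj A.1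

end GradedSign

/-- the short exact sequence
`0 → SC^k(T₁,n) ⊕ SC^{k-1}(T₁,n-1) → SC^k(T,n) → SC^k(T₂,n-1) → 0`,
whose maps moreover commute with the differential `D`. -/
theorem short_exact_sequence (G : SimpleGraph V) (hG : G.IsTree) (v w : V)
    (hv : G.neighborSet v = {w}) (k n : ℤ) :
    Function.Injective (inclMap G v k n (k - 1) (n - 1) k n) ∧
      LinearMap.range (inclMap G v k n (k - 1) (n - 1) k n) =
        LinearMap.ker (projMap G v w k n k (n - 1)) ∧
      Function.Surjective (projMap G v w k n k (n - 1)) ∧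
      Dgr G k n (k + 1) n ∘ₗ inclMap G v k n (k - 1) (n - 1) k n =
        inclMap G v (k + 1) n k (n - 1) (k + 1) n ∘ₗ
          ((Dgr (G.induce {x : V | x ≠ v}) k n (k + 1) n).prodMap
            (Dgr (G.induce {x : V | x ≠ v}) (k - 1) (n - 1) k (n - 1))) ∧
      Dgr (G.induce {x : V | x ≠ v ∧ x ≠ w}) k (n - 1) (k + 1) (n - 1) ∘ₗ
          projMap G v w k n k (n - 1) =
        projMap G v w (k + 1) n (k + 1) (n - 1) ∘ₗ Dgr G k n (k + 1) n := by
  have hadj : G.Adj v w := by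
    have h1 : w ∈ G.neighborSet v := by rw [hv]; exact Set.mem_singleton w
    exact h1
  have hkF : k = (k - 1) + 1 := by ring
  have hnF : n = (n - 1) + 1 := by ring
  have hkF' : k + 1 = k + 1 := rfl
  -- unfolded descriptions of the maps
  have hincl : ∀ f g, inclMap G v k n (k - 1) (n - 1) k n (f, g)
      = Function.extend (gextT G v k n) f 0
        + Function.extend (gextF G v (k - 1) (n - 1) k n hkF hnF) g 0 := by
    intro f g
    have h1 : inclMap G v k n (k - 1) (n - 1) k n (f, g)
        = sumLin (fun C₁ C => extendRel G v true C₁.1 C.1) f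
          + sumLin (fun C₁ C => extendRel G v false C₁.1 C.1) g := rfl
    rw [h1, sumLin_extT k n f, sumLin_extF (k - 1) (n - 1) k n hkF hnF g]
  have hincl' : ∀ f g, inclMap G v (k + 1) n k (n - 1) (k + 1) n (f, g)
      = Function.extend (gextT G v (k + 1) n) f 0
        + Function.extend (gextF G v k (n - 1) (k + 1) n hkF' hnF) g 0 := by
    intro f g
    have h1 : inclMap G v (k + 1) n k (n - 1) (k + 1) n (f, g)
        = sumLin (fun C₁ C => extendRel G v true C₁.1 C.1) f
          + sumLin (fun C₁ C => extendRel G v false C₁.1 C.1) g := rfl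
    rw [h1, sumLin_extT (k + 1) n f, sumLin_extF k (n - 1) (k + 1) n hkF' hnF g]
  have hproj : ∀ f C₂, projMap G v w k n k (n - 1) f C₂
      = f (gunquot hadj k (n - 1) k n rfl hnF C₂) :=
    fun f C₂ => sumLin_quot hadj k (n - 1) k n rfl hnF f C₂
  have hproj' : ∀ f C₂, projMap G v w (k + 1) n (k + 1) (n - 1) f C₂
      = f (gunquot hadj (k + 1) (n - 1) (k + 1) n rfl hnF C₂) :=
    fun f C₂ => sumLin_quot hadj (k + 1) (n - 1) (k + 1) n rfl hnF f C₂
  have hDgrG : ∀ (f : SC G k n) C', Dgr G k n (k + 1) n f C'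
      = ∑ C, if DStep C.1 C'.1 then f C else 0 := fun _ _ => rfl
  have hDgr1T : ∀ (f : SC (G.induce {x : V | x ≠ v}) k n) A',
      Dgr (G.induce {x : V | x ≠ v}) k n (k + 1) n f A'
      = ∑ A, if DStep A.1 A'.1 then f A else 0 := fun _ _ => rfl
  have hDgr1F : ∀ (f : SC (G.induce {x : V | x ≠ v}) (k - 1) (n - 1)) A',
      Dgr (G.induce {x : V | x ≠ v}) (k - 1) (n - 1) k (n - 1) f A'
      = ∑ A, if DStep A.1 A'.1 then f A else 0 := fun _ _ => rfl
  have hDgr2 : ∀ (f : SC (G.induce {x : V | x ≠ v ∧ x ≠ w}) k (n - 1)) A',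
      Dgr (G.induce {x : V | x ≠ v ∧ x ≠ w}) k (n - 1) (k + 1) (n - 1) f A'
      = ∑ A, if DStep A.1 A'.1 then f A else 0 := fun _ _ => rfl
  refine ⟨?_, ?_, ?_, ?_, ?_⟩
  -- 1 : injectivity
  · have key : ∀ fg : SC (G.induce {x : V | x ≠ v}) k n
        × SC (G.induce {x : V | x ≠ v}) (k - 1) (n - 1),
        inclMap G v k n (k - 1) (n - 1) k n fg = 0 → fg = 0 := by
      rintro ⟨f, g⟩ h0
      rw [hincl f g] at h0
      have hf : f = 0 := by
        funext A
        have h1 := congrFun h0 (gextT G v k n A)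
        rw [Pi.add_apply, (gextT_inj k n).extend_apply,
          Function.extend_apply' _ _ _
            (not_range_gextF (k - 1) (n - 1) k n hkF hnF _
              (by rw [gextT_sv]; simp))] at h1
        simpa using h1
      have hg : g = 0 := by
        funext A
        have h1 := congrFun h0 (gextF G v (k - 1) (n - 1) k n hkF hnF A)
        rw [Pi.add_apply, (gextF_inj (k - 1) (n - 1) k n hkF hnF).extend_apply,
          Function.extend_apply' _ _ _
            (not_range_gextT k n _ (by rw [gextF_sv]; simp))] at h1
        simpa using h1
      rw [Prod.ext_iff]
      exact ⟨hf, hg⟩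
    intro p q hpq
    have h2 : inclMap G v k n (k - 1) (n - 1) k n (p - q) = 0 := by
      rw [map_sub, hpq, sub_self]
    have := key (p - q) h2
    rwa [sub_eq_zero] at this
  -- 2 : exactness
  · ext F
    simp only [LinearMap.mem_range, LinearMap.mem_ker]
    constructor
    · rintro ⟨⟨f, g⟩, rfl⟩
      funext C₂
      rw [hproj, hincl, Pi.add_apply,
        Function.extend_apply' _ _ _
          (not_range_gextT k n _ (by rw [gunquot_sv]; simp)),
        Function.extend_apply' _ _ _
          (not_range_gextF (k - 1) (n - 1) k n hkF hnF _
            (by rw [gunquot_sv]; simp))]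
      simp
    · intro hF
      refine ⟨(F ∘ gextT G v k n, F ∘ gextF G v (k - 1) (n - 1) k n hkF hnF), ?_⟩
      funext C
      rw [hincl, Pi.add_apply]
      rcases hsv : C.1.sign v with _ | b
      · rw [Function.extend_apply' _ _ _
            (not_range_gextT k n C (by rw [hsv]; simp)),
          Function.extend_apply' _ _ _
            (not_range_gextF (k - 1) (n - 1) k n hkF hnF C (by rw [hsv]; simp))]
        have hvw : s(v, w) ∈ C.1.red := by
          obtain ⟨e, he, hve⟩ := (C.1.sign_none v).mp hsv
          rwa [← edge_with_v hv (C.1.matching.1 e he) hve]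
        obtain ⟨A, rfl⟩ := gunquot_surj hadj hv k (n - 1) k n rfl hnF C hvw
        have h3 := congrFun hF A
        rw [hproj] at h3
        simpa using h3.symm
      · cases b
        · obtain ⟨A, rfl⟩ := gextF_surj (k - 1) (n - 1) k n hkF hnF C hsv
          rw [(gextF_inj (k - 1) (n - 1) k n hkF hnF).extend_apply,
            Function.extend_apply' _ _ _
              (not_range_gextT k n _ (by rw [gextF_sv]; simp))]
          simp [Function.comp]
        · obtain ⟨A, rfl⟩ := gextT_surj k n C hsv
          rw [(gextT_inj k n).extend_apply,
            Function.extend_apply' _ _ _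
              (not_range_gextF (k - 1) (n - 1) k n hkF hnF _
                (by rw [gextT_sv]; simp))]
          simp [Function.comp]
  -- 3 : surjectivity
  · intro h
    refine ⟨Function.extend (gunquot hadj k (n - 1) k n rfl hnF) h 0, ?_⟩
    funext C₂
    rw [hproj, (gunquot_inj hadj k (n - 1) k n rfl hnF).extend_apply]
  -- 4 : commutation with incl
  · have keyT : ∀ (f : SC (G.induce {x : V | x ≠ v}) k n)
        (C' : {C : Config G // (Qg C : ℤ) = k + 1 ∧ (Eg C : ℤ) = n}),
        (∑ C, if DStep C.1 C'.1 then Function.extend (gextT G v k n) f 0 C else 0)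
          = Function.extend (gextT G v (k + 1) n)
              (Dgr (G.induce {x : V | x ≠ v}) k n (k + 1) n f) 0 C' := by
      intro f C'
      rw [sum_if_extend (gextT_inj k n)]
      by_cases hb : C'.1.sign v = some true
      · obtain ⟨A', rfl⟩ := gextT_surj (k + 1) n C' hb
        rw [(gextT_inj (k + 1) n).extend_apply, hDgr1T]
        refine Finset.sum_congr rfl fun A _ => ?_
        exact if_congr (DStep_extend_iff true A.1 A'.1) rfl rfl
      · rw [Function.extend_apply' _ _ _ (not_range_gextT (k + 1) n C' hb)]
        refine Finset.sum_eq_zero fun A _ => ?_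
        rw [if_neg]
        intro hds
        have h4 := DStep_sign_eq hds (x := v) (by rw [gextT_sv]; simp)
        rw [gextT_sv] at h4
        exact hb h4
    have keyF : ∀ (g : SC (G.induce {x : V | x ≠ v}) (k - 1) (n - 1))
        (C' : {C : Config G // (Qg C : ℤ) = k + 1 ∧ (Eg C : ℤ) = n}),
        (∑ C, if DStep C.1 C'.1 then
            Function.extend (gextF G v (k - 1) (n - 1) k n hkF hnF) g 0 C else 0)
          = Function.extend (gextF G v k (n - 1) (k + 1) n hkF' hnF)
              (Dgr (G.induce {x : V | x ≠ v}) (k - 1) (n - 1) k (n - 1) g) 0 C' := by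
      intro g C'
      rw [sum_if_extend (gextF_inj (k - 1) (n - 1) k n hkF hnF)]
      by_cases hb : C'.1.sign v = some false
      · obtain ⟨A', rfl⟩ := gextF_surj k (n - 1) (k + 1) n hkF' hnF C' hb
        rw [(gextF_inj k (n - 1) (k + 1) n hkF' hnF).extend_apply, hDgr1F]
        refine Finset.sum_congr rfl fun A _ => ?_
        exact if_congr (DStep_extend_iff false A.1 A'.1) rfl rfl
      · rw [Function.extend_apply' _ _ _
            (not_range_gextF k (n - 1) (k + 1) n hkF' hnF C' hb)]
        refine Finset.sum_eq_zero fun A _ => ?_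
        rw [if_neg]
        intro hds
        have h4 := DStep_sign_eq hds (x := v) (by rw [gextF_sv]; simp)
        rw [gextF_sv] at h4
        exact hb h4
    apply LinearMap.ext
    rintro ⟨f, g⟩
    rw [LinearMap.comp_apply, LinearMap.comp_apply, LinearMap.prodMap_apply]
    rw [hincl f g, hincl']
    rw [map_add]
    funext C'
    rw [Pi.add_apply, Pi.add_apply, hDgrG, hDgrG]
    rw [keyT f C', keyF g C']
  -- 5 : commutation with proj
  · apply LinearMap.ext
    intro f
    rw [LinearMap.comp_apply, LinearMap.comp_apply]
    funext C₂'
    rw [hDgr2, hproj']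
    have h5 : Dgr G k n (k + 1) n f (gunquot hadj (k + 1) (n - 1) (k + 1) n rfl hnF C₂')
        = ∑ C, if DStep C.1 (gunquot hadj (k + 1) (n - 1) (k + 1) n rfl hnF C₂').1
            then f C else 0 := hDgrG f _
    rw [h5]
    have hp : ∀ C : {C : Config G // (Qg C : ℤ) = k ∧ (Eg C : ℤ) = n},
        DStep C.1 (gunquot hadj (k + 1) (n - 1) (k + 1) n rfl hnF C₂').1
          → ∃ A, gunquot hadj k (n - 1) k n rfl hnF A = C := by
      intro C hds
      refine gunquot_surj hadj hv k (n - 1) k n rfl hnF C ?_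
      exact DStep_red_subset hds (Finset.mem_insert_self _ _)
    rw [sum_if_range (gunquot_inj hadj k (n - 1) k n rfl hnF) hp f]
    refine Finset.sum_congr rfl fun C₂ _ => ?_
    rw [hproj]
    exact (if_congr (DStep_unquot_iff hadj C₂.1 C₂'.1) rfl rfl).symm


end Seifert
end

section
/- Let A_n denote the path tree on n vertices with some enumeration of its vertices and Seifert matrix S. Then the Alexander polynomial of A_n equals det(tS − Sᵀ) = Σ_{k=0}^{n} (−1)^k t^k = 1 − t + t² − … + (−1)ⁿ tⁿ in ℤ[t]. -/
open Polynomial Matrix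

attribute [local instance] Classical.propDecidable

namespace Seifert

variable {V : Type} [Fintype V]

-- Auxiliary material for the proof
section Tri
variable {K : Type} [CommRing K]

def triE (t : K) (i j : ℕ) : K :=
  if i = j then 1 - t else if i + 1 = j then t else if j + 1 = i then -1 else 0

def tri (t : K) (n : ℕ) : Matrix (Fin n) (Fin n) K :=
  Matrix.of fun i j => triE t i j

lemma triE_shift (t : K) (i j : ℕ) : triE t (i+1) (j+1) = triE t i j := by
  simp only [triE, add_left_inj]

lemma tri_det (t : K) : ∀ n, (tri t n).det = ∑ k ∈ Finset.range (n+1), (-1:K)^k * t^k := by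
  intro n
  induction n using Nat.strong_induction_on with
  | _ n ih =>
    match n with
    | 0 => simp [tri, Matrix.det_fin_zero]
    | 1 =>
      rw [show (1:ℕ) = Nat.succ 0 from rfl, Matrix.det_fin_one]
      simp [tri, triE, Finset.sum_range_succ, sub_eq_add_neg]
    | (n+2) =>
      rw [show (n+2) = Nat.succ (n+1) from rfl, Matrix.det_succ_column_zero]
      rw [Fin.sum_univ_succ, Fin.sum_univ_succ]
      have hz : ∀ i : Fin n, tri t (n+2) i.succ.succ 0 = 0 := by
        intro i
        simp [tri, triE, Fin.val_succ]
      have hrest : ∀ i : Fin n,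
          (-1:K) ^ ((i.succ.succ : Fin (n+2)) : ℕ) * tri t (n+2) i.succ.succ 0 *
            ((tri t (n+2)).submatrix i.succ.succ.succAbove Fin.succ).det = 0 := by
        intro i; rw [hz]; ring
      rw [Finset.sum_congr rfl (fun i _ => hrest i), Finset.sum_const_zero, add_zero]
      have h00 : tri t (n+2) 0 0 = 1 - t := by simp [tri, triE]
      have h10 : tri t (n+2) 1 0 = -1 := by simp [tri, triE]
      have hsub0 : (tri t (n+2)).submatrix (Fin.succAbove 0) Fin.succ = tri t (n+1) := by
        ext i j
        simp [tri, Matrix.submatrix_apply, Fin.succAbove_zero, Fin.val_succ, triE_shift]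
      -- the minor at row 1
      set m1 : Matrix (Fin (n+1)) (Fin (n+1)) K :=
        (tri t (n+2)).submatrix (1 : Fin (n+2)).succAbove Fin.succ with hm1
      have hsa0 : (1 : Fin (n+2)).succAbove 0 = 0 := by
        apply Fin.succAbove_of_castSucc_lt
        simp [Fin.lt_def]
      have hsas : ∀ i : Fin n, (1 : Fin (n+2)).succAbove i.succ = i.succ.succ := by
        intro i
        apply Fin.succAbove_of_le_castSucc
        simp [Fin.le_def]
      have hm1det : m1.det = t * (tri t n).det := by
        rw [Matrix.det_succ_row_zero m1, Fin.sum_univ_succ]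
        have h0 : m1 0 0 = t := by
          simp [hm1, Matrix.submatrix_apply, hsa0, tri, triE]
        have hz2 : ∀ j : Fin n, m1 0 j.succ = 0 := by
          intro j
          simp [hm1, Matrix.submatrix_apply, hsa0, tri, triE, Fin.val_succ]
        have hrest2 : ∀ j : Fin n,
            (-1:K) ^ ((j.succ : Fin (n+1)) : ℕ) * m1 0 j.succ *
              (m1.submatrix Fin.succ j.succ.succAbove).det = 0 := by
          intro j; rw [hz2]; ring
        rw [Finset.sum_congr rfl (fun j _ => hrest2 j), Finset.sum_const_zero, add_zero]
        have hsub : m1.submatrix Fin.succ (Fin.succAbove 0) = tri t n := by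
          ext i j
          simp [hm1, Matrix.submatrix_apply, Fin.succAbove_zero, hsas, tri, Fin.val_succ,
            triE_shift]
        simp only [Fin.succ_zero_eq_one, Fin.val_zero, pow_zero, h0, hsub]
        ring
      simp only [Fin.succ_zero_eq_one, Fin.val_zero, Fin.val_one, pow_zero, pow_one,
        show (n+1).succ = n+2 from rfl]
      rw [hsub0, hm1det, h00, h10]
      rw [ih (n+1) (by omega), ih n (by omega)]
      rw [Finset.sum_range_succ (n := n+2), Finset.sum_range_succ (n := n+1)]
      ring

lemma aux1 {F : Type} [Field F] (a t : F) (ha : a ≠ 0) : a * t * a⁻¹ = t := by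
  rw [mul_comm a t, mul_assoc, mul_inv_cancel₀ ha, mul_one]

lemma aux2 {F : Type} [Field F] (a t : F) (ha : a ≠ 0) (ht : t ≠ 0) :
    a * t * (a * -t)⁻¹ = -1 := by
  rw [mul_inv, inv_neg,
    show a * t * (a⁻¹ * -t⁻¹) = -(a * a⁻¹ * (t * t⁻¹)) from by ring,
    mul_inv_cancel₀ ha, mul_inv_cancel₀ ht, one_mul]

lemma aux3 {F : Type} [Field F] (a t : F) (ha : a ≠ 0) :
    a * -t * -1 * a⁻¹ = t := by
  rw [show a * -t * -1 * a⁻¹ = a * a⁻¹ * t from by ring, mul_inv_cancel₀ ha, one_mul]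

end Tri


set_option maxHeartbeats 1000000 in
set_option synthInstance.maxHeartbeats 400000 in
/-- the Alexander polynomial of the path on `n` vertices is
`det (t S - Sᵀ) = 1 - t + t² - ⋯ + (-1)ⁿ tⁿ`. -/
theorem alexDet_pathGraph (n : ℕ) (hn : 1 ≤ n) {m : ℕ} (e : Fin n ≃ Fin m) :
    alexDet (SimpleGraph.pathGraph n) e =
      ∑ k ∈ Finset.range (n + 1), (-1 : Polynomial ℤ) ^ k * X ^ k := by
  have hm : n = m := by simpa using Fintype.card_congr e
  subst hm
  set G := SimpleGraph.pathGraph n with hG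
  set K := FractionRing (Polynomial ℤ)
  set φ : Polynomial ℤ →+* K := (algebraMap (Polynomial ℤ) K : Polynomial ℤ →+* K) with hφdef
  have hφ : Function.Injective φ := IsFractionRing.injective _ _
  apply hφ
  set τ : K := φ X with hτ
  have hτ0 : τ ≠ 0 := by
    rw [hτ]
    exact (map_ne_zero_iff φ hφ).mpr X_ne_zero
  classical
  -- the correction factors
  set c : ℕ → K := fun k => if h : k + 1 < n then
      (if e ⟨k, Nat.lt_of_succ_lt h⟩ < e ⟨k+1, h⟩ then 1 else -τ) else 1 with hcdef
  have hc0 : ∀ k, c k ≠ 0 := by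
    intro k
    rw [hcdef]
    dsimp only
    split_ifs with h1 h2
    · exact one_ne_zero
    · exact neg_ne_zero.mpr hτ0
    · exact one_ne_zero
  set δ : Fin n → K := fun v => ∏ i ∈ Finset.range v.val, c i with hδdef
  have hδ0 : ∀ v, δ v ≠ 0 := fun v => Finset.prod_ne_zero_iff.mpr (fun i _ => hc0 i)
  have hstep : ∀ u v : Fin n, (u:ℕ) + 1 = (v:ℕ) →
      δ v = δ u * (if e u < e v then 1 else -τ) := by
    intro u v h
    have h2 : (u:ℕ) + 1 < n := h ▸ v.isLt
    have hu : (⟨(u:ℕ), Nat.lt_of_succ_lt h2⟩ : Fin n) = u := by ext; rfl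
    have hv : (⟨(u:ℕ)+1, h2⟩ : Fin n) = v := by ext; exact h
    have hcv : c (u:ℕ) = if e u < e v then 1 else -τ := by
      rw [hcdef]; dsimp only; rw [dif_pos h2, hu, hv]
    rw [hδdef]
    dsimp only
    rw [← h, Finset.prod_range_succ, hcv]
  -- the Seifert matrix entries
  set sM := seifertMatrix G e with hsM
  set M0 : Matrix (Fin n) (Fin n) (Polynomial ℤ) :=
    (X : Polynomial ℤ) • (sM.map fun a => (C a : Polynomial ℤ)) -
      (sM.map fun a => (C a : Polynomial ℤ))ᵀ with hM0
  have hAD : alexDet G e = M0.det := rfl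
  rw [hAD, RingHom.map_det, RingHom.mapMatrix_apply]
  have hMent : ∀ a b, (M0.map φ) a b = τ * φ (C (sM a b)) - φ (C (sM b a)) := by
    intro a b
    rw [hM0]
    simp [Matrix.map_apply, Matrix.sub_apply, Matrix.smul_apply, Matrix.transpose_apply,
      smul_eq_mul, _root_.map_sub, _root_.map_mul, hτ]
  have hadj : ∀ u v : Fin n, G.Adj u v ↔ (u:ℕ) + 1 = (v:ℕ) ∨ (v:ℕ) + 1 = (u:ℕ) := by
    intro u v; rw [hG]; exact SimpleGraph.pathGraph_adj
  have hsMval : ∀ u v : Fin n, u ≠ v → G.Adj u v →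
      sM (e u) (e v) = if e u < e v then 1 else 0 := by
    intro u v huv hA
    rw [hsM]
    unfold seifertMatrix
    rw [if_neg (fun h => huv (e.injective h))]
    by_cases h : e u < e v
    · rw [if_pos ⟨h, by simpa using hA⟩, if_pos h]
    · rw [if_neg (fun hc => h hc.1), if_neg h]
  have hsM0 : ∀ u v : Fin n, u ≠ v → ¬ G.Adj u v → sM (e u) (e v) = 0 := by
    intro u v huv hA
    rw [hsM]
    unfold seifertMatrix
    rw [if_neg (fun h => huv (e.injective h)), if_neg (fun hc => hA (by simpa using hc.2))]
  have hEntry : ∀ u v : Fin n, (M0.map φ) (e u) (e v) = δ u * tri τ n u v * (δ v)⁻¹ := by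
    intro u v
    rw [hMent]
    by_cases huv : u = v
    · subst huv
      have h1 : sM (e u) (e u) = -1 := by
        rw [hsM]; unfold seifertMatrix; rw [if_pos rfl]
      have h2 : tri τ n u u = 1 - τ := by
        unfold tri triE; rw [Matrix.of_apply, if_pos rfl]
      rw [h1, h2, aux1 _ _ (hδ0 u)]
      simp only [map_neg, _root_.map_one, mul_neg, mul_one]
      ring
    · have hne : e u ≠ e v := fun h => huv (e.injective h)
      by_cases hA : G.Adj u v
      · rcases (hadj u v).mp hA with h | h
        · -- v = u + 1
          have htri : tri τ n u v = τ := by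
            unfold tri triE
            rw [Matrix.of_apply, if_neg (by omega), if_pos h]
          have hδv := hstep u v h
          rw [htri, hsMval u v huv hA, hsMval v u (Ne.symm huv) hA.symm]
          by_cases ho : e u < e v
          · rw [if_pos ho, if_neg (asymm ho), hδv, if_pos ho, mul_one, aux1 _ _ (hδ0 u)]
            simp
          · rw [if_neg ho, if_pos (lt_of_le_of_ne (not_lt.mp ho) (Ne.symm hne)), hδv,
              if_neg ho, aux2 _ _ (hδ0 u) hτ0]
            simp
        · -- u = v + 1
          have htri : tri τ n u v = -1 := by
            unfold tri triE
            rw [Matrix.of_apply, if_neg (by omega), if_neg (by omega), if_pos h]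
          have hδu := hstep v u h
          rw [htri, hsMval u v huv hA, hsMval v u (Ne.symm huv) hA.symm]
          by_cases ho : e v < e u
          · rw [if_neg (asymm ho), if_pos ho, hδu, if_pos ho, mul_one, aux1 _ _ (hδ0 v)]
            simp
          · rw [if_pos (lt_of_le_of_ne (not_lt.mp ho) hne), if_neg ho, hδu,
              if_neg ho, aux3 _ _ (hδ0 v)]
            simp
      · have htri : tri τ n u v = 0 := by
          unfold tri triE
          rw [Matrix.of_apply, if_neg (by exact fun hh => huv (Fin.ext hh)),
            if_neg (fun hh => hA ((hadj u v).mpr (Or.inl hh))),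
            if_neg (fun hh => hA ((hadj u v).mpr (Or.inr hh)))]
        rw [htri, hsM0 u v huv hA, hsM0 v u (Ne.symm huv) (fun h => hA h.symm)]
        simp
  have hMe : M0.map φ =
      (Matrix.of fun u v => δ u * tri τ n u v * (δ v)⁻¹).submatrix e.symm e.symm := by
    ext a b
    have := hEntry (e.symm a) (e.symm b)
    rw [Equiv.apply_symm_apply, Equiv.apply_symm_apply] at this
    simpa using this
  rw [hMe, Matrix.det_submatrix_equiv_self]
  have hfac : (Matrix.of fun u v => δ u * tri τ n u v * (δ v)⁻¹) =
      Matrix.diagonal δ * tri τ n * Matrix.diagonal (fun v => (δ v)⁻¹) := by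
    ext u v
    rw [Matrix.mul_diagonal, Matrix.diagonal_mul, Matrix.of_apply]
  rw [hfac, Matrix.det_mul, Matrix.det_mul, Matrix.det_diagonal, Matrix.det_diagonal]
  have hprod : (∏ v, δ v) * (∏ v, (δ v)⁻¹) = 1 := by
    rw [← Finset.prod_mul_distrib]
    rw [Finset.prod_congr rfl (fun v _ => mul_inv_cancel₀ (hδ0 v))]
    exact Finset.prod_const_one
  rw [mul_comm (∏ i, δ i) ((tri τ n).det), mul_assoc, hprod, mul_one, tri_det, map_sum]
  refine Finset.sum_congr rfl fun k _ => ?_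
  rw [_root_.map_mul, map_pow, map_pow, map_neg, _root_.map_one, hτ]

end Seifert
end

section
/- Let n ≥ 4 and let D_n denote the tree on n vertices obtained from a path on n−1 vertices by attaching one extra leaf to the second vertex of the path. Then the Alexander polynomial of D_n equals Δ(D_n)(t) = 1 − t + (−1)^{n−1} t^{n−1} + (−1)^n t^n in ℤ[t]. -/
open Polynomial Matrix

attribute [local instance] Classical.propDecidable

namespace Seifert

variable {V : Type} [Fintype V]

/-- The Dynkin diagram `D_n`: a path on the `n - 1` vertices `1, …, n-1` together with an
extra leaf `0` attached to the second vertex `2` of the path. -/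
def dynkinD (n : ℕ) : SimpleGraph (Fin n) :=
  SimpleGraph.fromRel fun i j =>
    ((i : ℕ) = 0 ∧ (j : ℕ) = 2) ∨ (1 ≤ (i : ℕ) ∧ (j : ℕ) = (i : ℕ) + 1)

-- ===== Auxiliary development for STATEMENT 17 =====

section AlexDynkin

open Equiv Finset

variable {m k : ℕ}

def IsEI (H : SimpleGraph (Fin m)) (σ : Equiv.Perm (Fin m)) : Prop :=
  ∀ i, σ i ≠ i → σ (σ i) = i ∧ H.Adj (σ i) i

noncomputable def wt (H : SimpleGraph (Fin m)) (σ : Equiv.Perm (Fin m)) : Polynomial ℤ :=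
  if IsEI H σ then X ^ (σ.support.card / 2) * (1 - X) ^ (m - σ.support.card) else 0

noncomputable def Wp (H : SimpleGraph (Fin m)) : Polynomial ℤ :=
  ∑ σ : Equiv.Perm (Fin m), wt H σ

noncomputable def Mx (H : SimpleGraph (Fin m)) : Matrix (Fin m) (Fin m) (Polynomial ℤ) :=
  fun i j => if i = j then 1 - X else
    if i < j ∧ H.Adj i j then X else if j < i ∧ H.Adj j i then -1 else 0

theorem det_Mx (H : SimpleGraph (Fin m)) (f : Fin m → ℕ) (hinj : Function.Injective f)
    (huniq : ∀ v a b : Fin m, H.Adj v a → H.Adj v b → f a < f v → f b < f v → a = b) :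
    (Mx H).det = Wp H := by
  rw [Matrix.det_apply, Wp]
  refine Finset.sum_congr rfl fun σ _ => ?_
  by_cases hEI : IsEI H σ
  · rw [wt, if_pos hEI]
    have hinv : ∀ i, σ (σ i) = i := by
      intro i
      by_cases h : σ i = i
      · rw [h, h]
      · exact (hEI i h).1
    have hadj : ∀ i, σ i ≠ i → H.Adj (σ i) i := fun i h => (hEI i h).2
    set s := σ.support with hs
    set U := s.filter (fun i => i < σ i) with hU
    set L := s.filter (fun i => σ i < i) with hL
    have hLm : ∀ a, a ∈ L ↔ σ a < a := by
      intro a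
      rw [hL, mem_filter, hs, Equiv.Perm.mem_support]
      exact ⟨fun h => h.2, fun h => ⟨ne_of_lt h, h⟩⟩
    have hUm : ∀ a, a ∈ U ↔ a < σ a := by
      intro a
      rw [hU, mem_filter, hs, Equiv.Perm.mem_support]
      exact ⟨fun h => h.2, fun h => ⟨ne_of_gt h, h⟩⟩
    have hsplit : s = L ∪ U := by
      ext x
      rw [mem_union, hLm, hUm, hs, Equiv.Perm.mem_support]
      constructor
      · intro hx
        rcases lt_or_gt_of_ne hx with h | h
        · exact Or.inl h
        · exact Or.inr h
      · rintro (h | h)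
        · exact ne_of_lt h
        · exact ne_of_gt h
    have hdisj : Disjoint L U := by
      rw [Finset.disjoint_left]
      intro a ha hb
      rw [hLm] at ha
      rw [hUm] at hb
      exact absurd hb (not_lt.mpr ha.le)
    have hcard : L.card = U.card := by
      apply Finset.card_bij (fun a _ => σ a)
      · intro a ha
        rw [hUm, hinv a]
        exact (hLm a).1 ha
      · intro a _ b _ h
        exact σ.injective h
      · intro b hb
        refine ⟨σ b, ?_, hinv b⟩
        rw [hLm, hinv b]
        exact (hUm b).1 hb
    have hsc : s.card = 2 * U.card := by
      rw [hsplit, Finset.card_union_of_disjoint hdisj, hcard]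
      ring
    have hcompl : ∏ a ∈ sᶜ, Mx H (σ a) a = (1 - X) ^ (m - s.card) := by
      rw [Finset.prod_congr rfl (g := fun _ => (1 - X : Polynomial ℤ)) ?_, Finset.prod_const,
        Finset.card_compl, Fintype.card_fin]
      intro a ha
      rw [Finset.mem_compl, hs, Equiv.Perm.notMem_support] at ha
      rw [Mx]
      simp [ha]
    have hsupp : ∏ a ∈ s, Mx H (σ a) a = X ^ U.card * (-1 : Polynomial ℤ) ^ U.card := by
      rw [hsplit, Finset.prod_union hdisj]
      have h1 : ∏ a ∈ L, Mx H (σ a) a = X ^ U.card := by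
        rw [Finset.prod_congr rfl (g := fun _ => (X : Polynomial ℤ)) ?_, Finset.prod_const, hcard]
        intro a ha
        have hlt := (hLm a).1 ha
        rw [Mx, if_neg (ne_of_lt hlt), if_pos ⟨hlt, hadj a (ne_of_lt hlt)⟩]
      have h2 : ∏ a ∈ U, Mx H (σ a) a = (-1 : Polynomial ℤ) ^ U.card := by
        rw [Finset.prod_congr rfl (g := fun _ => (-1 : Polynomial ℤ)) ?_, Finset.prod_const]
        intro a ha
        have hlt := (hUm a).1 ha
        rw [Mx, if_neg (ne_of_gt hlt), if_neg, if_pos ⟨hlt, (hadj a (ne_of_gt hlt)).symm⟩]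
        rintro ⟨h2, _⟩
        exact absurd hlt (not_lt.mpr h2.le)
      rw [h1, h2]
    have hprod : ∏ a, Mx H (σ a) a =
        X ^ U.card * (-1 : Polynomial ℤ) ^ U.card * (1 - X) ^ (m - s.card) := by
      rw [← Finset.prod_mul_prod_compl s (fun a => Mx H (σ a) a), hcompl, hsupp]
    -- sign
    have h2 : σ ^ 2 = 1 := by
      ext x
      simp [pow_two, Equiv.Perm.mul_apply, hinv]
    have hord : orderOf σ ∣ 2 := orderOf_dvd_of_pow_eq_one h2
    have hall2 : ∀ a ∈ σ.cycleType, a = 2 := by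
      intro a ha
      have h1 := Equiv.Perm.two_le_of_mem_cycleType ha
      have h3 : a ∣ 2 := by
        have h4 := Multiset.dvd_lcm ha
        rw [Equiv.Perm.lcm_cycleType] at h4
        exact h4.trans hord
      have h5 := Nat.le_of_dvd (by norm_num) h3
      omega
    have hct : σ.cycleType = Multiset.replicate (Multiset.card σ.cycleType) 2 :=
      Multiset.eq_replicate.2 ⟨rfl, hall2⟩
    have hsum2 : σ.cycleType.sum = 2 * Multiset.card σ.cycleType := by
      conv_lhs => rw [hct]
      rw [Multiset.sum_replicate, smul_eq_mul, mul_comm]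
    have hcc : Multiset.card σ.cycleType = U.card := by
      have h6 := Equiv.Perm.sum_cycleType σ
      rw [← hs] at h6
      omega
    have hsign : Equiv.Perm.sign σ = (-1) ^ U.card := by
      rw [Equiv.Perm.sign_of_cycleType, hsum2, hcc]
      rw [show 2 * U.card + U.card = 2 * U.card + U.card from rfl, pow_add, pow_mul]
      simp
    rw [hprod, hsign, show s.card / 2 = U.card by omega]
    rw [Units.smul_def]
    have hval : (((-1 : ℤˣ) ^ U.card : ℤˣ) : ℤ) = (-1 : ℤ) ^ U.card := by
      push_cast
      ring
    rw [hval, zsmul_eq_mul]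
    push_cast
    have hone : ((-1 : Polynomial ℤ)) ^ U.card * (-1) ^ U.card = 1 := by
      rw [← pow_add]
      exact Even.neg_one_pow ⟨U.card, rfl⟩
    linear_combination (X ^ U.card * (1 - X) ^ (m - s.card)) * hone
  · rw [wt, if_neg hEI]
    have hz : ∃ i, σ i ≠ i ∧ ¬ H.Adj (σ i) i := by
      by_contra hc
      push_neg at hc
      apply hEI
      intro i hi
      refine ⟨?_, hc i hi⟩
      by_contra h2
      have hB : (univ.filter fun j => σ (σ j) ≠ j).Nonempty :=
        ⟨i, by simp only [mem_filter, mem_univ, true_and]; exact h2⟩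
      obtain ⟨i₀, hi₀m, hmax⟩ := Finset.exists_max_image _ f hB
      simp only [mem_filter, mem_univ, true_and] at hi₀m
      have hm : σ i₀ ≠ i₀ := fun h => hi₀m (by rw [h, h])
      have haB : σ (σ (σ i₀)) ≠ σ i₀ := fun h => hi₀m (σ.injective h)
      have hbB : σ (σ (σ⁻¹ i₀)) ≠ σ⁻¹ i₀ := by
        rw [(Equiv.Perm.eq_inv_iff_eq (f := σ) (y := i₀)).mp rfl]
        intro h
        apply hi₀m
        rw [h, (Equiv.Perm.eq_inv_iff_eq (f := σ) (y := i₀)).mp rfl]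
      have hab : σ i₀ ≠ σ⁻¹ i₀ := fun h => hi₀m (by rw [h, (Equiv.Perm.eq_inv_iff_eq (f := σ) (y := i₀)).mp rfl])
      have hbi : σ⁻¹ i₀ ≠ i₀ := by
        intro h
        have h7 := congrArg σ h
        rw [(Equiv.Perm.eq_inv_iff_eq (f := σ) (y := i₀)).mp rfl] at h7
        exact hm h7.symm
      have hfa : f (σ i₀) < f i₀ :=
        lt_of_le_of_ne (hmax _ (by simp only [mem_filter, mem_univ, true_and]; exact haB))
          (fun h => hm (hinj h))
      have hfb : f (σ⁻¹ i₀) < f i₀ :=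
        lt_of_le_of_ne (hmax _ (by simp only [mem_filter, mem_univ, true_and]; exact hbB))
          (fun h => hbi (hinj h))
      have hAa : H.Adj i₀ (σ i₀) := (hc i₀ hm).symm
      have hAb : H.Adj i₀ (σ⁻¹ i₀) := by
        have h8 : σ (σ⁻¹ i₀) ≠ σ⁻¹ i₀ := by
          rw [(Equiv.Perm.eq_inv_iff_eq (f := σ) (y := i₀)).mp rfl]
          exact hbi.symm
        have h9 := hc _ h8
        rw [(Equiv.Perm.eq_inv_iff_eq (f := σ) (y := i₀)).mp rfl] at h9
        exact h9
      exact hab (huniq i₀ _ _ hAa hAb hfa hfb)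
    obtain ⟨i, hi, hna⟩ := hz
    have h0 : Mx H (σ i) i = 0 := by
      rw [Mx]
      rw [if_neg hi, if_neg, if_neg]
      · rintro ⟨_, h2⟩
        exact hna h2.symm
      · rintro ⟨_, h2⟩
        exact hna h2
    have hP : ∏ a, Mx H (σ a) a = 0 := Finset.prod_eq_zero (Finset.mem_univ i) h0
    rw [hP, smul_zero]

def delV (H : SimpleGraph (Fin m)) (v : Fin m) : SimpleGraph (Fin m) where
  Adj i j := H.Adj i j ∧ i ≠ v ∧ j ≠ v
  symm := ⟨by rintro a b ⟨h1, h2, h3⟩; exact ⟨h1.symm, h3, h2⟩⟩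
  loopless := ⟨fun a h => H.loopless.irrefl a h.1⟩

lemma wt_zero_branch (H : SimpleGraph (Fin (k + 1))) (τ : Equiv.Perm (Fin k)) :
    wt H (Equiv.Perm.decomposeFin.symm (0, τ)) = (1 - X) * wt (H.comap Fin.succ) τ := by
  set σ := Equiv.Perm.decomposeFin.symm (0, τ) with hσ
  have h00 : σ 0 = 0 := Equiv.Perm.decomposeFin_symm_apply_zero 0 τ
  have hap : ∀ i : Fin k, σ i.succ = (τ i).succ := by
    intro i
    rw [hσ, Equiv.Perm.decomposeFin_symm_apply_succ]
    simp
  have hiff : IsEI H σ ↔ IsEI (H.comap Fin.succ) τ := by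
    constructor
    · intro h i hi
      have h1 := h i.succ (by rw [hap]; exact fun hh => hi (Fin.succ_injective _ hh))
      rw [hap] at h1
      obtain ⟨ha1, ha2⟩ := h1
      rw [hap] at ha1
      exact ⟨Fin.succ_injective _ ha1, ha2⟩
    · intro h x hx
      induction x using Fin.cases with
      | zero => exact absurd h00 hx
      | succ i =>
        rw [hap] at hx ⊢
        have hi : τ i ≠ i := fun hh => hx (by rw [hh])
        obtain ⟨h1, h2⟩ := h i hi
        rw [hap]
        exact ⟨by rw [h1], h2⟩
  have hsuppset : σ.support = τ.support.map ⟨Fin.succ, Fin.succ_injective k⟩ := by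
    ext x
    induction x using Fin.cases with
    | zero =>
      simp only [Equiv.Perm.mem_support, h00, ne_eq, not_true, false_iff, Finset.mem_map]
      rintro ⟨a, _, ha⟩
      exact Fin.succ_ne_zero a ha
    | succ i =>
      simp only [Equiv.Perm.mem_support, hap, ne_eq, Finset.mem_map,
        Function.Embedding.coeFn_mk]
      constructor
      · intro h
        exact ⟨i, fun hh => h (by rw [hh]), rfl⟩
      · rintro ⟨a, ha, haa⟩ h
        have : a = i := Fin.succ_injective _ haa
        subst this
        exact ha (Fin.succ_injective _ h)
  have hsc : σ.support.card = τ.support.card := by rw [hsuppset, Finset.card_map]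
  have hle : τ.support.card ≤ k := by
    have := Finset.card_le_univ τ.support
    simpa using this
  rw [wt, wt, hsc]
  by_cases h : IsEI (H.comap Fin.succ) τ
  · rw [if_pos (hiff.2 h), if_pos h]
    rw [show k + 1 - τ.support.card = (k - τ.support.card) + 1 by omega, pow_succ]
    ring
  · rw [if_neg (fun hh => h (hiff.1 hh)), if_neg h, mul_zero]

lemma wt_leaf_branch (H : SimpleGraph (Fin (k + 1))) (b : Fin (k + 1)) (hb : H.Adj 0 b)
    (τ : Equiv.Perm (Fin k)) :
    (1 - X) * wt H (Equiv.Perm.decomposeFin.symm (b, τ)) =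
      X * wt (delV (H.comap Fin.succ) (b.pred hb.ne')) τ := by
  have hb0 : b ≠ 0 := hb.ne'
  set j0 : Fin k := b.pred hb0 with hj0
  have hj0b : j0.succ = b := Fin.succ_pred b hb0
  set σ := Equiv.Perm.decomposeFin.symm (b, τ) with hσ
  have hσ0 : σ 0 = b := Equiv.Perm.decomposeFin_symm_apply_zero b τ
  have hap : ∀ i : Fin k, σ i.succ = Equiv.swap 0 b ((τ i).succ) := fun i =>
    Equiv.Perm.decomposeFin_symm_apply_succ τ b i
  by_cases hfix : τ j0 = j0
  · -- main case
    have hσb : σ b = 0 := by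
      rw [← hj0b, hap, hfix, hj0b, Equiv.swap_apply_right]
    have hσs : ∀ i : Fin k, i ≠ j0 → σ i.succ = (τ i).succ := by
      intro i hi
      rw [hap, Equiv.swap_apply_of_ne_of_ne (Fin.succ_ne_zero _)]
      rw [← hj0b]
      exact fun hh => hi (τ.injective (by rw [Fin.succ_injective _ hh, hfix]))
    have hiff : IsEI H σ ↔ IsEI (delV (H.comap Fin.succ) j0) τ := by
      constructor
      · intro h i hi
        have hij0 : i ≠ j0 := fun hh => hi (by rw [hh, hfix])
        have hτij0 : τ i ≠ j0 := fun hh => hi (τ.injective (by rw [hh, hfix]))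
        have h1 := h i.succ (by rw [hσs i hij0]; exact fun hh => hi (Fin.succ_injective _ hh))
        rw [hσs i hij0] at h1
        obtain ⟨ha1, ha2⟩ := h1
        rw [hσs _ hτij0] at ha1
        exact ⟨Fin.succ_injective _ ha1, ha2, hτij0, hij0⟩
      · intro h x hx
        induction x using Fin.cases with
        | zero =>
          rw [hσ0]
          exact ⟨hσb, hb.symm⟩
        | succ i =>
          by_cases hij0 : i = j0
          · subst hij0
            rw [hj0b, hσb] at hx ⊢
            rw [hσ0]
            exact ⟨rfl, hb⟩
          · rw [hσs i hij0] at hx ⊢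
            have hi : τ i ≠ i := fun hh => hx (by rw [hh])
            obtain ⟨h1, h2, h3, _⟩ := h i hi
            rw [hσs _ h3, h1]
            exact ⟨rfl, h2⟩
    have hj0ns : j0 ∉ τ.support := by
      rw [Equiv.Perm.notMem_support]
      exact hfix
    have hsuppset : σ.support =
        insert 0 (insert b (τ.support.map ⟨Fin.succ, Fin.succ_injective k⟩)) := by
      ext x
      induction x using Fin.cases with
      | zero =>
        rw [Equiv.Perm.mem_support, hσ0]
        constructor
        · intro _
          exact Finset.mem_insert_self 0 _
        · intro _
          exact hb0
      | succ i =>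
        rw [Equiv.Perm.mem_support, Finset.mem_insert, Finset.mem_insert, Finset.mem_map]
        constructor
        · intro h
          by_cases hij0 : i = j0
          · subst hij0
            exact Or.inr (Or.inl hj0b)
          · rw [hσs i hij0] at h
            refine Or.inr (Or.inr ⟨i, Equiv.Perm.mem_support.mpr ?_, rfl⟩)
            exact fun hh => h (by rw [hh])
        · rintro (h | h | ⟨a, ha, haa⟩)
          · exact absurd h (Fin.succ_ne_zero i)
          · rw [h, hσb]
            exact fun hh => hb0 hh.symm
          · have hai : a = i := Fin.succ_injective _ haa
            subst hai
            have hij0 : a ≠ j0 := fun hh => (Equiv.Perm.mem_support.mp ha) (by rw [hh, hfix])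
            rw [hσs a hij0]
            exact fun hh => (Equiv.Perm.mem_support.mp ha) (Fin.succ_injective _ hh)
    have hbnm : b ∉ τ.support.map ⟨Fin.succ, Fin.succ_injective k⟩ := by
      rw [Finset.mem_map]
      rintro ⟨a, ha, haa⟩
      rw [← hj0b] at haa
      have : a = j0 := Fin.succ_injective _ haa
      subst this
      exact (Equiv.Perm.mem_support.mp ha) hfix
    have h0nm : (0 : Fin (k+1)) ∉ insert b (τ.support.map ⟨Fin.succ, Fin.succ_injective k⟩) := by
      rw [Finset.mem_insert]
      rintro (h | h)
      · exact hb0 h.symm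
      · rw [Finset.mem_map] at h
        obtain ⟨a, _, haa⟩ := h
        exact Fin.succ_ne_zero a haa
    have hsc : σ.support.card = τ.support.card + 2 := by
      rw [hsuppset, Finset.card_insert_of_notMem h0nm, Finset.card_insert_of_notMem hbnm,
        Finset.card_map]
    have hle : τ.support.card ≤ k - 1 := by
      have h1 : τ.support ⊆ Finset.univ.erase j0 := by
        intro x hx
        rw [Finset.mem_erase]
        exact ⟨fun hh => hj0ns (hh ▸ hx), Finset.mem_univ x⟩
      have h2 := Finset.card_le_card h1
      rw [Finset.card_erase_of_mem (Finset.mem_univ _), Finset.card_univ, Fintype.card_fin] at h2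
      exact h2
    have hk1 : 1 ≤ k := j0.pos
    rw [wt, wt, hsc]
    by_cases h : IsEI (delV (H.comap Fin.succ) j0) τ
    · rw [if_pos (hiff.2 h), if_pos h]
      rw [show (τ.support.card + 2) / 2 = τ.support.card / 2 + 1 from
        Nat.add_div_right _ (by norm_num)]
      rw [show k + 1 - (τ.support.card + 2) = k - 1 - τ.support.card by omega]
      rw [show k - τ.support.card = (k - 1 - τ.support.card) + 1 by omega]
      rw [pow_succ, pow_succ]
      ring
    · rw [if_neg (fun hh => h (hiff.1 hh)), if_neg h, mul_zero, mul_zero]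
  · -- τ j0 ≠ j0 : both sides vanish
    have hrhs : ¬ IsEI (delV (H.comap Fin.succ) j0) τ := by
      intro h
      exact (h j0 hfix).2.2.2 rfl
    have hlhs : ¬ IsEI H σ := by
      intro h
      have h1 := h 0 (by rw [hσ0]; exact hb0)
      rw [hσ0] at h1
      have hσb : σ b = 0 := h1.1
      rw [← hj0b, hap] at hσb
      have h2 : (τ j0).succ ≠ 0 := Fin.succ_ne_zero _
      have h3 : (τ j0).succ ≠ b := by
        rw [← hj0b]
        exact fun hh => hfix (Fin.succ_injective _ hh)
      rw [Equiv.swap_apply_of_ne_of_ne h2 h3] at hσb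
      exact h2 hσb
    rw [wt, wt, if_neg hlhs, if_neg hrhs, mul_zero, mul_zero]

lemma Wp_isolated (H : SimpleGraph (Fin (k + 1))) (h0 : ∀ c, ¬ H.Adj 0 c) :
    Wp H = (1 - X) * Wp (H.comap Fin.succ) := by
  rw [Wp, ← Equiv.sum_comp (Equiv.Perm.decomposeFin.symm) (wt H), Fintype.sum_prod_type]
  rw [← Finset.sum_subset (Finset.subset_univ {(0 : Fin (k+1))})]
  · rw [Finset.sum_singleton]
    rw [Wp, Finset.mul_sum]
    exact Finset.sum_congr rfl fun τ _ => wt_zero_branch H τ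
  · intro p _ hp
    rw [Finset.mem_singleton] at hp
    apply Finset.sum_eq_zero
    intro τ _
    rw [wt, if_neg]
    intro hEI
    have h1 : Equiv.Perm.decomposeFin.symm (p, τ) 0 = p :=
      Equiv.Perm.decomposeFin_symm_apply_zero p τ
    have h2 := hEI 0 (by rw [h1]; exact hp)
    rw [h1] at h2
    exact h0 p h2.2.symm

lemma Wp_leaf (H : SimpleGraph (Fin (k + 1))) (b : Fin (k + 1)) (hb : H.Adj 0 b)
    (huniq : ∀ c, H.Adj 0 c → c = b) :
    (1 - X) * Wp H = (1 - X) ^ 2 * Wp (H.comap Fin.succ) +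
      X * Wp (delV (H.comap Fin.succ) (b.pred hb.ne')) := by
  have hb0 : b ≠ 0 := hb.ne'
  have hsum : Wp H = (∑ τ : Equiv.Perm (Fin k), wt H (Equiv.Perm.decomposeFin.symm (0, τ)))
      + ∑ τ : Equiv.Perm (Fin k), wt H (Equiv.Perm.decomposeFin.symm (b, τ)) := by
    rw [Wp, ← Equiv.sum_comp (Equiv.Perm.decomposeFin.symm) (wt H), Fintype.sum_prod_type]
    rw [← Finset.sum_subset (Finset.subset_univ ({0, b} : Finset (Fin (k+1))))]
    · rw [Finset.sum_pair (fun hh => hb0 hh.symm)]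
    · intro p _ hp
      rw [Finset.mem_insert, Finset.mem_singleton] at hp
      push_neg at hp
      apply Finset.sum_eq_zero
      intro τ _
      rw [wt, if_neg]
      intro hEI
      have h1 : (Equiv.Perm.decomposeFin.symm (p, τ)) 0 = p :=
        Equiv.Perm.decomposeFin_symm_apply_zero p τ
      have h2 := hEI 0 (by rw [h1]; exact hp.1)
      rw [h1] at h2
      exact hp.2 (huniq p h2.2.symm)
  have hz : (∑ τ : Equiv.Perm (Fin k), wt H (Equiv.Perm.decomposeFin.symm (0, τ)))
      = (1 - X) * Wp (H.comap Fin.succ) := by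
    rw [Wp, Finset.mul_sum]
    exact Finset.sum_congr rfl fun τ _ => wt_zero_branch H τ
  rw [hsum, mul_add, hz]
  congr 1
  · ring
  · rw [Finset.mul_sum, Wp, Finset.mul_sum]
    exact Finset.sum_congr rfl fun τ _ => wt_leaf_branch H b hb τ

lemma Wp_congr {n : ℕ} (G : SimpleGraph (Fin n)) (e : Fin n ≃ Fin m) :
    Wp (G.comap ⇑e.symm) = Wp G := by
  have hmn : m = n := by
    have := Fintype.card_congr e
    simpa using this.symm
  subst hmn
  rw [Wp, Wp]
  apply Fintype.sum_equiv (e.symm.permCongr)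
  intro σ
  set ρ := e.symm.permCongr σ with hρdef
  have hap : ∀ v, ρ v = e.symm (σ (e v)) := by
    intro v
    rw [hρdef, Equiv.permCongr_apply, Equiv.symm_symm]
  have hmov : ∀ v, ρ v ≠ v ↔ σ (e v) ≠ e v := by
    intro v
    rw [hap]
    constructor
    · intro h hh
      exact h (by rw [hh, e.symm_apply_apply])
    · intro h hh
      apply h
      have h3 := congrArg e hh
      rwa [e.apply_symm_apply] at h3
  have hiff : IsEI (G.comap ⇑e.symm) σ ↔ IsEI G ρ := by
    constructor
    · intro h v hv
      obtain ⟨h1, h2⟩ := h (e v) ((hmov v).1 hv)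
      refine ⟨?_, ?_⟩
      · rw [hap, hap, e.apply_symm_apply, h1, e.symm_apply_apply]
      · rw [hap]
        have h2' : G.Adj (e.symm (σ (e v))) (e.symm (e v)) := h2
        rwa [e.symm_apply_apply] at h2'
    · intro h a ha
      have hv : ρ (e.symm a) ≠ e.symm a := by
        rw [hmov, e.apply_symm_apply]
        exact ha
      obtain ⟨h1, h2⟩ := h (e.symm a) hv
      rw [hap (e.symm a), e.apply_symm_apply] at h1 h2
      rw [hap (e.symm (σ a)), e.apply_symm_apply] at h1
      exact ⟨e.symm.injective h1, h2⟩
  have hsupp : ρ.support = σ.support.map e.symm.toEmbedding := by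
    ext x
    rw [Equiv.Perm.mem_support, Finset.mem_map]
    constructor
    · intro h
      refine ⟨e x, ?_, e.symm_apply_apply x⟩
      rw [Equiv.Perm.mem_support]
      exact (hmov x).1 h
    · rintro ⟨a, ha, rfl⟩
      rw [Equiv.Perm.mem_support] at ha
      simp only [Equiv.toEmbedding_apply]
      rw [hmov, e.apply_symm_apply]
      exact ha
  rw [wt, wt, hsupp, Finset.card_map]
  by_cases h : IsEI (G.comap ⇑e.symm) σ
  · rw [if_pos h, if_pos (hiff.1 h)]
  · rw [if_neg h, if_neg (fun hh => h (hiff.2 hh))]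

def pathG (c : ℕ) : SimpleGraph (Fin c) :=
  SimpleGraph.fromRel fun i j => (j : ℕ) = (i : ℕ) + 1

lemma pathG_adj {c : ℕ} (a b : Fin c) :
    (pathG c).Adj a b ↔ ((b : ℕ) = (a : ℕ) + 1 ∨ (a : ℕ) = (b : ℕ) + 1) := by
  rw [pathG, SimpleGraph.fromRel_adj]
  constructor
  · exact fun h => h.2
  · intro h
    refine ⟨?_, h⟩
    intro hh
    subst hh
    omega

lemma one_sub_X_ne : (1 - X : Polynomial ℤ) ≠ 0 := by
  intro h
  have h2 := congrArg (Polynomial.eval 0) h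
  simp at h2

lemma one_add_X_ne : (1 + X : Polynomial ℤ) ≠ 0 := by
  intro h
  have h2 := congrArg (Polynomial.eval 0) h
  simp at h2

lemma wt_one (H : SimpleGraph (Fin m)) : wt H 1 = (1 - X) ^ m := by
  rw [wt, if_pos]
  · simp
  · intro i hi
    simp at hi

lemma Wp_path_zero : Wp (pathG 0) = 1 := by
  haveI : Subsingleton (Equiv.Perm (Fin 0)) :=
    ⟨fun a b => Equiv.ext fun x => x.elim0⟩
  rw [Wp, Fintype.sum_subsingleton _ 1, wt_one, pow_zero]

lemma Wp_path_one : Wp (pathG 1) = 1 - X := by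
  haveI : Subsingleton (Equiv.Perm (Fin 1)) :=
    ⟨fun a b => Equiv.ext fun x => Subsingleton.elim _ _⟩
  rw [Wp, Fintype.sum_subsingleton _ 1, wt_one, pow_one]

lemma pathG_comap (c : ℕ) : (pathG (c + 1)).comap Fin.succ = pathG c := by
  ext a b
  rw [SimpleGraph.comap_adj, pathG_adj, pathG_adj, Fin.val_succ, Fin.val_succ]
  omega

lemma delV_pathG_comap (c : ℕ) :
    (delV (pathG (c + 1)) 0).comap Fin.succ = pathG c := by
  ext a b
  rw [SimpleGraph.comap_adj]
  show (pathG (c+1)).Adj a.succ b.succ ∧ a.succ ≠ 0 ∧ b.succ ≠ 0 ↔ _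
  rw [pathG_adj, pathG_adj, Fin.val_succ, Fin.val_succ]
  constructor
  · rintro ⟨h, _, _⟩
    omega
  · intro h
    exact ⟨by omega, Fin.succ_ne_zero a, Fin.succ_ne_zero b⟩

lemma Wp_delV_pathG_zero (c : ℕ) :
    Wp (delV (pathG (c + 1)) 0) = (1 - X) * Wp (pathG c) := by
  rw [Wp_isolated _ ?_, delV_pathG_comap]
  intro d
  rintro ⟨_, h2, _⟩
  exact h2 rfl

lemma Wp_path_rec (c : ℕ) :
    Wp (pathG (c + 2)) = (1 - X) * Wp (pathG (c + 1)) + X * Wp (pathG c) := by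
  apply mul_left_cancel₀ one_sub_X_ne
  have hb : (pathG (c + 2)).Adj 0 1 := by
    rw [pathG_adj]
    left
    rw [Fin.val_one, Fin.val_zero]
  have huniq : ∀ d, (pathG (c + 2)).Adj 0 d → d = 1 := by
    intro d hd
    rw [pathG_adj, Fin.val_zero] at hd
    apply Fin.ext
    rw [Fin.val_one]
    omega
  have h := Wp_leaf (pathG (c + 2)) 1 hb huniq
  have hpred : (1 : Fin (c + 2)).pred hb.ne' = 0 := by
    apply Fin.ext
    simp
  rw [hpred, pathG_comap, Wp_delV_pathG_zero] at h
  rw [h]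
  ring

lemma Wp_path (c : ℕ) : Wp (pathG c) = ∑ i ∈ Finset.range (c + 1), (-X : Polynomial ℤ) ^ i := by
  induction c using Nat.strong_induction_on with
  | _ c ih =>
    match c with
    | 0 => rw [Wp_path_zero]; simp
    | 1 =>
      rw [Wp_path_one, Finset.sum_range_succ, Finset.sum_range_one]
      ring
    | (c + 2) =>
      rw [Wp_path_rec, ih (c + 1) (by omega), ih c (by omega),
        Finset.sum_range_succ _ (c + 2), Finset.sum_range_succ _ (c + 1)]
      ring

lemma dynkin_comap (c : ℕ) : (dynkinD (c + 1)).comap Fin.succ = pathG c := by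
  ext a b
  rw [SimpleGraph.comap_adj, dynkinD, SimpleGraph.fromRel_adj, pathG_adj,
    Fin.val_succ, Fin.val_succ]
  constructor
  · rintro ⟨_, h⟩
    omega
  · intro h
    refine ⟨?_, ?_⟩
    · intro hh
      have := congrArg Fin.val hh
      rw [Fin.val_succ, Fin.val_succ] at this
      omega
    · omega

lemma delV_pathG_one_comap (c : ℕ) :
    (delV (pathG (c + 2)) 1).comap Fin.succ = delV (pathG (c + 1)) 0 := by
  ext a b
  rw [SimpleGraph.comap_adj]
  show (pathG (c+2)).Adj a.succ b.succ ∧ a.succ ≠ 1 ∧ b.succ ≠ 1 ↔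
    (pathG (c+1)).Adj a b ∧ a ≠ 0 ∧ b ≠ 0
  rw [pathG_adj, pathG_adj, Fin.val_succ, Fin.val_succ]
  have hs : ∀ x : Fin (c + 1), x.succ = 1 ↔ x = 0 := by
    intro x
    rw [Fin.ext_iff, Fin.ext_iff, Fin.val_succ, Fin.val_one, Fin.val_zero]
    omega
  constructor
  · rintro ⟨h, h1, h2⟩
    exact ⟨by omega, fun hh => h1 ((hs a).2 hh), fun hh => h2 ((hs b).2 hh)⟩
  · rintro ⟨h, h1, h2⟩
    exact ⟨by omega, fun hh => h1 ((hs a).1 hh), fun hh => h2 ((hs b).1 hh)⟩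

lemma Wp_delV_pathG_one (c : ℕ) :
    Wp (delV (pathG (c + 2)) 1) = (1 - X) * ((1 - X) * Wp (pathG c)) := by
  rw [Wp_isolated _ ?_, delV_pathG_one_comap, Wp_delV_pathG_zero]
  intro d
  rintro ⟨h, h1, h2⟩
  rw [pathG_adj, Fin.val_zero] at h
  apply h2
  apply Fin.ext
  rw [Fin.val_one]
  omega

lemma Wp_dynkin_rec (j : ℕ) :
    Wp (dynkinD (j + 4)) =
      (1 - X) * Wp (pathG (j + 3)) + X * ((1 - X) * Wp (pathG (j + 1))) := by
  apply mul_left_cancel₀ one_sub_X_ne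
  have h2lt : (2 : ℕ) < j + 4 := by omega
  set b : Fin (j + 4) := ⟨2, h2lt⟩ with hbdef
  have hb : (dynkinD (j + 4)).Adj 0 b := by
    rw [dynkinD, SimpleGraph.fromRel_adj]
    constructor
    · intro hh
      have := congrArg Fin.val hh
      simp [hbdef] at this
    · left
      left
      simp [hbdef]
  have huniq : ∀ d, (dynkinD (j + 4)).Adj 0 d → d = b := by
    intro d hd
    rw [dynkinD, SimpleGraph.fromRel_adj] at hd
    obtain ⟨hne, h⟩ := hd
    apply Fin.ext
    simp only [hbdef, Fin.val_zero] at h ⊢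
    omega
  have h := Wp_leaf (dynkinD (j + 4)) b hb huniq
  have hpred : b.pred hb.ne' = (1 : Fin (j + 3)) := by
    apply Fin.ext
    simp [hbdef]
  rw [hpred, dynkin_comap, Wp_delV_pathG_one] at h
  rw [h]
  ring

lemma Wp_dynkin (j : ℕ) :
    Wp (dynkinD (j + 4)) = 1 - X + (-1 : Polynomial ℤ) ^ (j + 3) * X ^ (j + 3) +
      (-1 : Polynomial ℤ) ^ (j + 4) * X ^ (j + 4) := by
  rw [Wp_dynkin_rec, Wp_path, Wp_path]
  apply mul_left_cancel₀ one_add_X_ne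
  have g1 := geom_sum_mul (-X : Polynomial ℤ) (j + 4)
  have g2 := geom_sum_mul (-X : Polynomial ℤ) (j + 2)
  rw [show ((-1 : Polynomial ℤ)) ^ (j + 3) * X ^ (j + 3) = (-X) ^ (j + 3) by rw [← neg_pow]]
  rw [show ((-1 : Polynomial ℤ)) ^ (j + 4) * X ^ (j + 4) = (-X) ^ (j + 4) by rw [← neg_pow]]
  simp only [show j + 3 + 1 = j + 4 from rfl, show j + 1 + 1 = j + 2 from rfl]
  linear_combination (X - 1) * g1 + (X * (X - 1)) * g2

def ordD (n : ℕ) : Fin n → ℕ := fun v =>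
  if (v : ℕ) = 2 then 0 else if (v : ℕ) = 0 then 1 else if (v : ℕ) = 1 then 2 else v

lemma ordD_inj (n : ℕ) : Function.Injective (ordD n) := by
  intro a b h
  apply Fin.ext
  unfold ordD at h
  split_ifs at h <;> omega

lemma dynkin_adj_val {n : ℕ} (a b : Fin n) (h : (dynkinD n).Adj a b) :
    ((a : ℕ) = 0 ∧ (b : ℕ) = 2) ∨ ((b : ℕ) = 0 ∧ (a : ℕ) = 2) ∨
      (1 ≤ (a : ℕ) ∧ (b : ℕ) = (a : ℕ) + 1) ∨ (1 ≤ (b : ℕ) ∧ (a : ℕ) = (b : ℕ) + 1) := by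
  rw [dynkinD, SimpleGraph.fromRel_adj] at h
  tauto

lemma dynkin_uniq {n : ℕ} (v a b : Fin n) (hva : (dynkinD n).Adj v a)
    (hvb : (dynkinD n).Adj v b)
    (h1 : ordD n a < ordD n v) (h2 : ordD n b < ordD n v) : a = b := by
  have ha := dynkin_adj_val v a hva
  have hb := dynkin_adj_val v b hvb
  apply Fin.ext
  unfold ordD at h1 h2
  split_ifs at h1 h2 <;> omega


end AlexDynkin

/-- the Alexander polynomial of the Dynkin diagram `D_n` is
`1 - t + (-1)^{n-1} t^{n-1} + (-1)ⁿ tⁿ`. -/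
theorem alexDet_dynkinD (n : ℕ) (hn : 4 ≤ n) {m : ℕ} (e : Fin n ≃ Fin m) :
    alexDet (dynkinD n) e =
      1 - X + (-1 : Polynomial ℤ) ^ (n - 1) * X ^ (n - 1) +
        (-1 : Polynomial ℤ) ^ n * X ^ n := by
  obtain ⟨j, rfl⟩ : ∃ j, n = j + 4 := ⟨n - 4, by omega⟩
  have hMx : alexDet (dynkinD (j + 4)) e = (Mx ((dynkinD (j + 4)).comap ⇑e.symm)).det := by
    simp only [alexDet]
    congr 1
    ext i l
    simp only [Matrix.sub_apply, Matrix.smul_apply, Matrix.map_apply, Matrix.transpose_apply,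
      Mx, SimpleGraph.comap_adj, smul_eq_mul, seifertMatrix]
    by_cases h1 : i = l
    · subst h1
      simp only [if_pos rfl]
      simp
      ring
    · rw [if_neg h1, if_neg h1, if_neg (fun hh : l = i => h1 hh.symm)]
      by_cases h2 : i < l ∧ (dynkinD (j + 4)).Adj (e.symm i) (e.symm l)
      · rw [if_pos h2, if_pos h2, if_neg (fun h3 => absurd h2.1 (not_lt.mpr h3.1.le))]
        simp
      · rw [if_neg h2, if_neg h2]
        by_cases h3 : l < i ∧ (dynkinD (j + 4)).Adj (e.symm l) (e.symm i)
        · rw [if_pos h3, if_pos h3]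
          simp
        · rw [if_neg h3, if_neg h3]
          simp
  rw [hMx, det_Mx _ (fun v => ordD (j + 4) (e.symm v)) ?_ ?_, Wp_congr, Wp_dynkin]
  · norm_num
  · exact fun a b h => e.symm.injective (ordD_inj _ h)
  · intro v a b hva hvb h1 h2
    exact e.symm.injective (dynkin_uniq _ _ _ hva hvb h1 h2)


end Seifert
end
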